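/- Fix a queue i ∈ [n], fixed strategies p_{−i} ∈ (Δ^{m−1})^{n−1} of the other queues, and any two strategies p, p' ∈ Δ^{m−1}. Define h(t) = r_i(t·p + (1−t)·p', p_{−i}) for t ∈ [0,1]. Then h is piecewise linear on [0,1] and has no local maximum in the interior; in particular h is quasiconvex: for all 0 ≤ a ≤ t ≤ b ≤ 1, h(t) ≤ max{h(a), h(b)}. -/

import Mathlib

open Finset

/-- Membership of a vector in the probability simplex `Δ^{m-1}`. -/
def inSimplex {m : ℕ} (q : Fin m → ℝ) : Prop :=
  (∀ j, 0 ≤ q j) ∧ ∑ j, q j = 1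

/-- `α(S | p, μ, S')`: expected number of packets cleared by the queues in `S` in one round,
when the queues in `S'` have priority over `S` and `S` has priority over all other queues. -/
noncomputable def alphaQ {n m : ℕ} (p : Fin n → Fin m → ℝ) (μ : Fin m → ℝ)
    (S S' : Finset (Fin n)) : ℝ :=
  ∑ j : Fin m, μ j * (∏ i ∈ S', (1 - p i j)) * (1 - ∏ i ∈ S, (1 - p i j))

/-- `λ(S)`: total arrival rate of the queues in `S`. -/
def lamQ {n : ℕ} (lam : Fin n → ℝ) (S : Finset (Fin n)) : ℝ :=
  ∑ i ∈ S, lam i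

/-- `f(S | p, μ, λ, S') = α(S | p, μ, S') / λ(S)`. -/
noncomputable def fQ {n m : ℕ} (p : Fin n → Fin m → ℝ) (μ : Fin m → ℝ) (lam : Fin n → ℝ)
    (S S' : Finset (Fin n)) : ℝ :=
  alphaQ p μ S S' / lamQ lam S

open scoped Classical in
/-- The union of all nonempty subsets `S ⊆ I` minimizing `f(· | p, μ, λ, S')` over the
nonempty subsets of `I` (the "largest-cardinality minimizer"). -/
noncomputable def unionMin {n m : ℕ} (p : Fin n → Fin m → ℝ) (μ : Fin m → ℝ) (lam : Fin n → ℝ)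
    (I S' : Finset (Fin n)) : Finset (Fin n) :=
  I.powerset.sup fun S =>
    if S.Nonempty ∧ ∀ T ∈ I.powerset, T.Nonempty → fQ p μ lam S S' ≤ fQ p μ lam T S' then S
    else ∅

/-- The group selected by one step of the rate algorithm on remaining queues `I`
with current (already discounted) service rates `μ`. -/
noncomputable def topSet {n m : ℕ} (p : Fin n → Fin m → ℝ) (μ : Fin m → ℝ) (lam : Fin n → ℝ)
    (I : Finset (Fin n)) : Finset (Fin n) :=
  unionMin p μ lam I ∅

open scoped Classical in
/-- Fuelled version of the recursive rate algorithm: `I` is the set of remaining queues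
and `μc` the current (discounted) service rates. -/
noncomputable def rateAux {n m : ℕ} (lam : Fin n → ℝ) (p : Fin n → Fin m → ℝ) :
    ℕ → Finset (Fin n) → (Fin m → ℝ) → Fin n → ℝ
  | 0, _, _, _ => 0
  | fuel + 1, I, μc, i =>
    if ∀ S ∈ I.powerset, S.Nonempty → 1 ≤ fQ p μc lam S ∅ then 0
    else if i ∈ topSet p μc lam I then 1 - fQ p μc lam (topSet p μc lam I) ∅
    else
      rateAux lam p fuel (I \ topSet p μc lam I)
        (fun j => μc j * ∏ r ∈ topSet p μc lam I, (1 - p r j)) i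

/-- The rate function `r : (Δ^{m-1})^n → [0,1]^n` computed by the recursive algorithm:
`rateQ lam μ p i` is the long-run aging rate `r_i(p)` of queue `i`. -/
noncomputable def rateQ {n m : ℕ} (lam : Fin n → ℝ) (μ : Fin m → ℝ)
    (p : Fin n → Fin m → ℝ) (i : Fin n) : ℝ :=
  rateAux lam p (n + 1) Finset.univ μ i

/-- State (remaining queues, discounted service rates) of the rate algorithm after `k` steps. -/
noncomputable def stateQ {n m : ℕ} (lam : Fin n → ℝ) (μ : Fin m → ℝ)
    (p : Fin n → Fin m → ℝ) : ℕ → Finset (Fin n) × (Fin m → ℝ)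
  | 0 => (Finset.univ, μ)
  | k + 1 =>
    ((stateQ lam μ p k).1 \ topSet p (stateQ lam μ p k).2 lam (stateQ lam μ p k).1,
      fun j => (stateQ lam μ p k).2 j *
        ∏ r ∈ topSet p (stateQ lam μ p k).2 lam (stateQ lam μ p k).1, (1 - p r j))

/-- `g_{k+1} = max {0, 1 - f_{k+1}}`: the aging rate of the `(k+1)`st group output by
the rate algorithm (`k = 0` corresponds to `S_1`). -/
noncomputable def gQ {n m : ℕ} (lam : Fin n → ℝ) (μ : Fin m → ℝ)
    (p : Fin n → Fin m → ℝ) (k : ℕ) : ℝ :=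
  max 0 (1 - fQ p (stateQ lam μ p k).2 lam
    (topSet p (stateQ lam μ p k).2 lam (stateQ lam μ p k).1) ∅)

/-- `f* = min_{∅ ≠ S ⊆ [n]} f(S | p)`. -/
noncomputable def fstarQ {n m : ℕ} (p : Fin n → Fin m → ℝ) (μ : Fin m → ℝ)
    (lam : Fin n → ℝ) : ℝ :=
  sInf ((fun S => fQ p μ lam S ∅) '' {S : Finset (Fin n) | S.Nonempty})

/-- A nonempty subset is tight if it minimizes `f(· | p)` over all nonempty subsets of `[n]`. -/
def IsTight {n m : ℕ} (p : Fin n → Fin m → ℝ) (μ : Fin m → ℝ) (lam : Fin n → ℝ)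
    (S : Finset (Fin n)) : Prop :=
  S.Nonempty ∧ ∀ T : Finset (Fin n), T.Nonempty → fQ p μ lam S ∅ ≤ fQ p μ lam T ∅

/-- `T` is a level subset at the next level, given that `W` is the union of all level
subsets at the previous levels: `T` is an inclusion-minimal nonempty subset of `K \ W`
with `f(T | W) = f*`, where `K` is the union of all tight subsets. -/
def IsLevelSet {n m : ℕ} (p : Fin n → Fin m → ℝ) (μ : Fin m → ℝ) (lam : Fin n → ℝ)
    (W T : Finset (Fin n)) : Prop :=
  T.Nonempty ∧ T ⊆ unionMin p μ lam Finset.univ ∅ \ W ∧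
    fQ p μ lam T W = fstarQ p μ lam ∧
    ∀ T' : Finset (Fin n), T'.Nonempty → T' ⊆ T →
      fQ p μ lam T' W = fstarQ p μ lam → T' = T

open scoped Classical in
/-- `levelUnion p μ lam ℓ` is the union of all level subsets at levels `≤ ℓ`
in the level partition of the union `K` of all tight subsets. -/
noncomputable def levelUnion {n m : ℕ} (p : Fin n → Fin m → ℝ) (μ : Fin m → ℝ)
    (lam : Fin n → ℝ) : ℕ → Finset (Fin n)
  | 0 => ∅
  | ℓ + 1 =>
    levelUnion p μ lam ℓ ∪
      Finset.univ.powerset.sup fun T =>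
        if IsLevelSet p μ lam (levelUnion p μ lam ℓ) T then T else ∅

namespace QL

open scoped Classical

variable {n m : ℕ}

/-- `α(S)` with empty priority set. -/
noncomputable def aQ (π : Fin n → Fin m → ℝ) (ν : Fin m → ℝ) (S : Finset (Fin n)) : ℝ :=
  alphaQ π ν S ∅

lemma aQ_eq (π : Fin n → Fin m → ℝ) (ν : Fin m → ℝ) (S : Finset (Fin n)) :
    aQ π ν S = ∑ j : Fin m, ν j * (1 - ∏ r ∈ S, (1 - π r j)) := by
  simp [aQ, alphaQ]

/-- Entrywise bounds for a profile. -/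
def Pent (π : Fin n → Fin m → ℝ) : Prop := ∀ r j, 0 ≤ π r j ∧ π r j ≤ 1

lemma prod_one_sub_nonneg {π : Fin n → Fin m → ℝ} (hπ : Pent π) (S : Finset (Fin n))
    (j : Fin m) : 0 ≤ ∏ r ∈ S, (1 - π r j) :=
  Finset.prod_nonneg fun r _ => by linarith [(hπ r j).2]

lemma prod_one_sub_le_one {π : Fin n → Fin m → ℝ} (hπ : Pent π) (S : Finset (Fin n))
    (j : Fin m) : ∏ r ∈ S, (1 - π r j) ≤ 1 :=
  Finset.prod_le_one (fun r _ => by linarith [(hπ r j).2]) (fun r _ => by linarith [(hπ r j).1])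

lemma aQ_nonneg {π : Fin n → Fin m → ℝ} {ν : Fin m → ℝ} (hπ : Pent π) (hν : ∀ j, 0 ≤ ν j)
    (S : Finset (Fin n)) : 0 ≤ aQ π ν S := by
  rw [aQ_eq]
  refine Finset.sum_nonneg fun j _ => mul_nonneg (hν j) ?_
  linarith [prod_one_sub_le_one hπ S j]

lemma aQ_empty (π : Fin n → Fin m → ℝ) (ν : Fin m → ℝ) : aQ π ν ∅ = 0 := by
  simp [aQ_eq]

/-- Submodularity of `α`. -/
lemma aQ_submod {π : Fin n → Fin m → ℝ} {ν : Fin m → ℝ} (hπ : Pent π) (hν : ∀ j, 0 ≤ ν j)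
    (S T : Finset (Fin n)) : aQ π ν (S ∪ T) + aQ π ν (S ∩ T) ≤ aQ π ν S + aQ π ν T := by
  rw [aQ_eq, aQ_eq, aQ_eq, aQ_eq, ← Finset.sum_add_distrib, ← Finset.sum_add_distrib]
  refine Finset.sum_le_sum fun j _ => ?_
  have hSi : (S ∩ T) ∪ (S \ T) = S := by rw [Finset.union_comm, Finset.sdiff_union_inter]
  have hTi : (S ∩ T) ∪ (T \ S) = T := by
    rw [Finset.inter_comm, Finset.union_comm, Finset.sdiff_union_inter]
  have hUi : ((S ∩ T) ∪ (S \ T)) ∪ (T \ S) = S ∪ T := by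
    rw [hSi, Finset.union_sdiff_self_eq_union]
  have hdisj1 : Disjoint (S ∩ T) (S \ T) := Finset.disjoint_sdiff.mono_left Finset.inter_subset_right
  have hdisj2 : Disjoint (S ∩ T) (T \ S) := Finset.disjoint_sdiff.mono_left Finset.inter_subset_left
  have hdisj3 : Disjoint ((S ∩ T) ∪ (S \ T)) (T \ S) := by
    rw [hSi]; exact Finset.disjoint_sdiff
  have hPS : ∏ r ∈ S, (1 - π r j) = (∏ r ∈ S ∩ T, (1 - π r j)) * ∏ r ∈ S \ T, (1 - π r j) := by
    conv_lhs => rw [← hSi]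
    rw [Finset.prod_union hdisj1]
  have hPT : ∏ r ∈ T, (1 - π r j) = (∏ r ∈ S ∩ T, (1 - π r j)) * ∏ r ∈ T \ S, (1 - π r j) := by
    conv_lhs => rw [← hTi]
    rw [Finset.prod_union hdisj2]
  have hPU : ∏ r ∈ S ∪ T, (1 - π r j)
      = ((∏ r ∈ S ∩ T, (1 - π r j)) * ∏ r ∈ S \ T, (1 - π r j)) * ∏ r ∈ T \ S, (1 - π r j) := by
    conv_lhs => rw [← hUi]
    rw [Finset.prod_union hdisj3, Finset.prod_union hdisj1]
  rw [hPS, hPT, hPU]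
  have hA0 : 0 ≤ ∏ r ∈ S ∩ T, (1 - π r j) := prod_one_sub_nonneg hπ _ j
  have hB1 : ∏ r ∈ S \ T, (1 - π r j) ≤ 1 := prod_one_sub_le_one hπ _ j
  have hC1 : ∏ r ∈ T \ S, (1 - π r j) ≤ 1 := prod_one_sub_le_one hπ _ j
  have hB0 : 0 ≤ ∏ r ∈ S \ T, (1 - π r j) := prod_one_sub_nonneg hπ _ j
  have hC0 : 0 ≤ ∏ r ∈ T \ S, (1 - π r j) := prod_one_sub_nonneg hπ _ j
  have hν' := hν j
  nlinarith [mul_nonneg (mul_nonneg hA0 (by linarith : (0:ℝ) ≤ 1 - ∏ r ∈ S \ T, (1 - π r j)))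
      (by linarith : (0:ℝ) ≤ 1 - ∏ r ∈ T \ S, (1 - π r j)), hν j,
    mul_nonneg (hν j) (mul_nonneg (mul_nonneg hA0 (by linarith : (0:ℝ) ≤ 1 - ∏ r ∈ S \ T, (1 - π r j)))
      (by linarith : (0:ℝ) ≤ 1 - ∏ r ∈ T \ S, (1 - π r j)))]

lemma lamQ_nonneg {lam : Fin n → ℝ} (hlam : ∀ r, 0 < lam r) (S : Finset (Fin n)) :
    0 ≤ lamQ lam S :=
  Finset.sum_nonneg fun r _ => (hlam r).le

lemma lamQ_pos {lam : Fin n → ℝ} (hlam : ∀ r, 0 < lam r) {S : Finset (Fin n)}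
    (hS : S.Nonempty) : 0 < lamQ lam S :=
  Finset.sum_pos (fun r _ => hlam r) hS

lemma lamQ_mono {lam : Fin n → ℝ} (hlam : ∀ r, 0 < lam r) {S T : Finset (Fin n)}
    (h : S ⊆ T) : lamQ lam S ≤ lamQ lam T :=
  Finset.sum_le_sum_of_subset_of_nonneg h fun r _ _ => (hlam r).le

lemma lamQ_union_inter {lam : Fin n → ℝ} (S T : Finset (Fin n)) :
    lamQ lam (S ∪ T) + lamQ lam (S ∩ T) = lamQ lam S + lamQ lam T :=
  Finset.sum_union_inter

lemma lamQ_union_disjoint {lam : Fin n → ℝ} {S T : Finset (Fin n)} (h : Disjoint S T) :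
    lamQ lam (S ∪ T) = lamQ lam S + lamQ lam T :=
  Finset.sum_union h

lemma lamQ_strict {lam : Fin n → ℝ} (hlam : ∀ r, 0 < lam r) {S T : Finset (Fin n)}
    (h : S ⊂ T) : lamQ lam S < lamQ lam T :=
  Finset.sum_lt_sum_of_subset h.subset (Finset.exists_of_ssubset h).choose_spec.1
    (Finset.exists_of_ssubset h).choose_spec.2 (hlam _) fun r _ _ => (hlam r).le

end QL
namespace QL
open scoped Classical
variable {n m : ℕ}

noncomputable def gg (π : Fin n → Fin m → ℝ) (ν : Fin m → ℝ) (lam : Fin n → ℝ)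
    (θ : ℝ) (S : Finset (Fin n)) : ℝ :=
  aQ π ν S - θ * lamQ lam S

lemma gg_empty (π : Fin n → Fin m → ℝ) (ν : Fin m → ℝ) (lam : Fin n → ℝ) (θ : ℝ) :
    gg π ν lam θ ∅ = 0 := by simp [gg, aQ_empty, lamQ]

lemma gg_submod {π : Fin n → Fin m → ℝ} {ν : Fin m → ℝ} {lam : Fin n → ℝ}
    (hπ : Pent π) (hν : ∀ j, 0 ≤ ν j) (θ : ℝ) (S T : Finset (Fin n)) :
    gg π ν lam θ (S ∪ T) + gg π ν lam θ (S ∩ T) ≤ gg π ν lam θ S + gg π ν lam θ T := by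
  have h1 := aQ_submod hπ hν S T
  have h2 : θ * lamQ lam (S ∪ T) + θ * lamQ lam (S ∩ T) = θ * lamQ lam S + θ * lamQ lam T := by
    rw [← mul_add, ← mul_add, lamQ_union_inter]
  simp only [gg]; linarith

/-- `S` is a minimizer of `gg θ` among subsets of `I`. -/
def MinOn (π : Fin n → Fin m → ℝ) (ν : Fin m → ℝ) (lam : Fin n → ℝ)
    (I : Finset (Fin n)) (θ : ℝ) (S : Finset (Fin n)) : Prop :=
  S ⊆ I ∧ ∀ T ⊆ I, gg π ν lam θ S ≤ gg π ν lam θ T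

def Uset (π : Fin n → Fin m → ℝ) (ν : Fin m → ℝ) (lam : Fin n → ℝ)
    (I : Finset (Fin n)) (i : Fin n) : Set ℝ :=
  {θ | ∃ S, i ∈ S ∧ MinOn π ν lam I θ S}

noncomputable def ThetaI (π : Fin n → Fin m → ℝ) (ν : Fin m → ℝ) (lam : Fin n → ℝ)
    (I : Finset (Fin n)) (i : Fin n) : ℝ :=
  sInf (Uset π ν lam I i)

section facts
variable {π : Fin n → Fin m → ℝ} {ν : Fin m → ℝ} {lam : Fin n → ℝ}
  {I : Finset (Fin n)} {i : Fin n}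

lemma minOn_union (hπ : Pent π) (hν : ∀ j, 0 ≤ ν j) {θ : ℝ} {S S' : Finset (Fin n)}
    (hS : MinOn π ν lam I θ S) (hS' : MinOn π ν lam I θ S') :
    MinOn π ν lam I θ (S ∪ S') := by
  obtain ⟨hSI, hSm⟩ := hS
  obtain ⟨hS'I, hS'm⟩ := hS'
  refine ⟨Finset.union_subset hSI hS'I, fun T hT => ?_⟩
  have h1 := gg_submod (lam := lam) hπ hν θ S S'
  have h2 := hSm (S ∩ S') ((Finset.inter_subset_left).trans hSI)
  have h3 := hS'm T hT
  linarith

lemma exists_global_min (π : Fin n → Fin m → ℝ) (ν : Fin m → ℝ) (lam : Fin n → ℝ)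
    (I : Finset (Fin n)) (θ : ℝ) :
    ∃ M, M ⊆ I ∧ ∀ T ⊆ I, gg π ν lam θ M ≤ gg π ν lam θ T := by
  obtain ⟨M, hM, hmin⟩ := I.powerset.exists_min_image (gg π ν lam θ)
    ⟨∅, Finset.empty_mem_powerset I⟩
  exact ⟨M, Finset.mem_powerset.1 hM, fun T hT => hmin T (Finset.mem_powerset.2 hT)⟩

lemma uset_upset (hπ : Pent π) (hν : ∀ j, 0 ≤ ν j) (hlam : ∀ r, 0 < lam r)
    {θ θ' : ℝ} (hle : θ ≤ θ') (hθ : θ ∈ Uset π ν lam I i) : θ' ∈ Uset π ν lam I i := by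
  obtain ⟨S, hiS, hSI, hSm⟩ := hθ
  obtain ⟨M, hMI, hMm⟩ := exists_global_min π ν lam I θ'
  refine ⟨S ∪ M, Finset.mem_union_left _ hiS, Finset.union_subset hSI hMI, fun T hT => ?_⟩
  have h1 := gg_submod (lam := lam) hπ hν θ' S M
  have h2 : gg π ν lam θ' S - gg π ν lam θ' (S ∩ M)
      = (gg π ν lam θ S - gg π ν lam θ (S ∩ M))
        - (θ' - θ) * (lamQ lam S - lamQ lam (S ∩ M)) := by
    simp only [gg]; ring
  have h3 := hSm (S ∩ M) ((Finset.inter_subset_left).trans hSI)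
  have h4 : lamQ lam (S ∩ M) ≤ lamQ lam S := lamQ_mono hlam Finset.inter_subset_left
  have h5 := hMm T hT
  have h6 := hMm (S ∪ M) (Finset.union_subset hSI hMI)
  nlinarith

lemma uset_nonneg (hπ : Pent π) (hν : ∀ j, 0 ≤ ν j) (hlam : ∀ r, 0 < lam r)
    {θ : ℝ} (hθ : θ ∈ Uset π ν lam I i) : 0 ≤ θ := by
  by_contra hneg
  push_neg at hneg
  obtain ⟨S, hiS, hSI, hSm⟩ := hθ
  have h1 := hSm ∅ (Finset.empty_subset I)
  rw [gg_empty] at h1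
  have h2 : 0 < lamQ lam S := lamQ_pos hlam ⟨i, hiS⟩
  have h3 : 0 ≤ aQ π ν S := aQ_nonneg hπ hν S
  simp only [gg] at h1
  nlinarith

lemma uset_nonempty (hπ : Pent π) (hν : ∀ j, 0 ≤ ν j) (hlam : ∀ r, 0 < lam r)
    (hiI : i ∈ I) : (Uset π ν lam I i).Nonempty := by
  set Λ : ℝ := Finset.univ.inf' ⟨i, Finset.mem_univ i⟩ lam with hΛdef
  have hΛpos : 0 < Λ := by
    obtain ⟨r, -, hr⟩ := Finset.exists_mem_eq_inf' (⟨i, Finset.mem_univ i⟩ :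
      (Finset.univ : Finset (Fin n)).Nonempty) lam
    rw [hΛdef, hr]; exact hlam r
  refine ⟨aQ π ν I / Λ, I, hiI, le_refl I, fun T hT => ?_⟩
  by_cases hTI : T = I
  · subst hTI; exact le_refl _
  · have hssub : T ⊂ I := ssubset_of_subset_of_ne hT hTI
    have hne : (I \ T).Nonempty := by
      obtain ⟨x, hxI, hxT⟩ := Finset.exists_of_ssubset hssub
      exact ⟨x, Finset.mem_sdiff.2 ⟨hxI, hxT⟩⟩
    obtain ⟨r, hr⟩ := hne
    have hlow : Λ ≤ lamQ lam (I \ T) := by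
      calc Λ ≤ lam r := Finset.inf'_le lam (Finset.mem_univ r)
        _ ≤ lamQ lam (I \ T) := Finset.single_le_sum (fun x _ => (hlam x).le) hr
    have hsplit : lamQ lam I - lamQ lam T = lamQ lam (I \ T) := by
      have := Finset.sum_sdiff (f := lam) hssub.subset
      simp only [lamQ]; linarith
    have hθnonneg : 0 ≤ aQ π ν I / Λ := div_nonneg (aQ_nonneg hπ hν I) hΛpos.le
    have h1 : aQ π ν I - aQ π ν T ≤ aQ π ν I := by linarith [aQ_nonneg hπ hν T]
    have h2 : aQ π ν I ≤ (aQ π ν I / Λ) * Λ := by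
      rw [div_mul_cancel₀ _ hΛpos.ne']
    have h3 : (aQ π ν I / Λ) * Λ ≤ (aQ π ν I / Λ) * (lamQ lam I - lamQ lam T) := by
      rw [hsplit]; exact mul_le_mul_of_nonneg_left hlow hθnonneg
    simp only [gg]; nlinarith

lemma uset_isClosed (π : Fin n → Fin m → ℝ) (ν : Fin m → ℝ) (lam : Fin n → ℝ)
    (I : Finset (Fin n)) (i : Fin n) : IsClosed (Uset π ν lam I i) := by
  have hrw : Uset π ν lam I i
      = ⋃ (S : Finset (Fin n)),
          ⋂ (T : Finset (Fin n)),
            {θ | i ∈ S ∧ S ⊆ I ∧ (T ⊆ I → gg π ν lam θ S ≤ gg π ν lam θ T)} := by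
    ext θ
    simp only [Uset, Set.mem_setOf_eq, Set.mem_iUnion, Set.mem_iInter, MinOn]
    constructor
    · rintro ⟨S, h1, h2, h3⟩; exact ⟨S, fun T => ⟨h1, h2, fun hT => h3 T hT⟩⟩
    · rintro ⟨S, hS⟩
      exact ⟨S, (hS ∅).1, (hS ∅).2.1, fun T hT => (hS T).2.2 hT⟩
  rw [hrw]
  refine isClosed_iUnion_of_finite fun S => isClosed_iInter fun T => ?_
  by_cases h1 : i ∈ S ∧ S ⊆ I ∧ T ⊆ I
  · have : {θ | i ∈ S ∧ S ⊆ I ∧ (T ⊆ I → gg π ν lam θ S ≤ gg π ν lam θ T)}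
        = {θ | gg π ν lam θ S ≤ gg π ν lam θ T} := by
      ext θ; simp [h1.1, h1.2.1, h1.2.2]
    rw [this]
    exact isClosed_le (by simp only [gg]; fun_prop) (by simp only [gg]; fun_prop)
  · by_cases h2 : i ∈ S ∧ S ⊆ I
    · have : {θ | i ∈ S ∧ S ⊆ I ∧ (T ⊆ I → gg π ν lam θ S ≤ gg π ν lam θ T)}
          = Set.univ := by
        ext θ
        have hTI : ¬ T ⊆ I := fun h => h1 ⟨h2.1, h2.2, h⟩
        simp [h2.1, h2.2, hTI]
      rw [this]; exact isClosed_univ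
    · have : {θ | i ∈ S ∧ S ⊆ I ∧ (T ⊆ I → gg π ν lam θ S ≤ gg π ν lam θ T)} = ∅ := by
        ext θ
        simp only [Set.mem_setOf_eq, Set.mem_empty_iff_false, iff_false]
        rintro ⟨ha, hb, -⟩; exact h2 ⟨ha, hb⟩
      rw [this]; exact isClosed_empty

lemma theta_mem (hπ : Pent π) (hν : ∀ j, 0 ≤ ν j) (hlam : ∀ r, 0 < lam r)
    (hiI : i ∈ I) : ThetaI π ν lam I i ∈ Uset π ν lam I i :=
  (uset_isClosed π ν lam I i).csInf_mem (uset_nonempty hπ hν hlam hiI)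
    ⟨0, fun _ hx => uset_nonneg hπ hν hlam hx⟩

lemma theta_le_iff (hπ : Pent π) (hν : ∀ j, 0 ≤ ν j) (hlam : ∀ r, 0 < lam r)
    (hiI : i ∈ I) {θ : ℝ} :
    θ ∈ Uset π ν lam I i ↔ ThetaI π ν lam I i ≤ θ := by
  constructor
  · intro h
    exact csInf_le ⟨0, fun _ hx => uset_nonneg hπ hν hlam hx⟩ h
  · intro h
    exact uset_upset hπ hν hlam h (theta_mem hπ hν hlam hiI)

lemma theta_nonneg (hπ : Pent π) (hν : ∀ j, 0 ≤ ν j) (hlam : ∀ r, 0 < lam r)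
    (hiI : i ∈ I) : 0 ≤ ThetaI π ν lam I i :=
  uset_nonneg hπ hν hlam (theta_mem hπ hν hlam hiI)

end facts
end QL
namespace QL
open scoped Classical
variable {n m : ℕ}

lemma fq_eq (π : Fin n → Fin m → ℝ) (ν : Fin m → ℝ) (lam : Fin n → ℝ) (S : Finset (Fin n)) :
    fQ π ν lam S ∅ = aQ π ν S / lamQ lam S := rfl

/-- `S` is a minimizer of `fQ` over the nonempty subsets of `I`. -/
def IsFmin (π : Fin n → Fin m → ℝ) (ν : Fin m → ℝ) (lam : Fin n → ℝ)
    (I S : Finset (Fin n)) : Prop :=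
  S.Nonempty ∧ S ⊆ I ∧ ∀ T ⊆ I, T.Nonempty → fQ π ν lam S ∅ ≤ fQ π ν lam T ∅

section part1
variable {π : Fin n → Fin m → ℝ} {ν : Fin m → ℝ} {lam : Fin n → ℝ}
  {I : Finset (Fin n)} {i : Fin n}

lemma fq_le_mul {S : Finset (Fin n)} (hlam : ∀ r, 0 < lam r) (hS : S.Nonempty) {F : ℝ}
    (h : F ≤ fQ π ν lam S ∅) : F * lamQ lam S ≤ aQ π ν S := by
  rw [fq_eq, le_div_iff₀ (lamQ_pos hlam hS)] at h
  exact h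

lemma fq_val_mul {S : Finset (Fin n)} (hlam : ∀ r, 0 < lam r) (hS : S.Nonempty) :
    aQ π ν S = fQ π ν lam S ∅ * lamQ lam S := by
  rw [fq_eq, div_mul_cancel₀ _ (lamQ_pos hlam hS).ne']

/-- union of two f-minimizers is an f-minimizer -/
lemma isFmin_union (hπ : Pent π) (hν : ∀ j, 0 ≤ ν j) (hlam : ∀ r, 0 < lam r)
    {S T : Finset (Fin n)} (hS : IsFmin π ν lam I S) (hT : IsFmin π ν lam I T) :
    IsFmin π ν lam I (S ∪ T) := by
  obtain ⟨hSne, hSI, hSm⟩ := hS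
  obtain ⟨hTne, hTI, hTm⟩ := hT
  set F := fQ π ν lam S ∅ with hFdef
  have hFT : fQ π ν lam T ∅ = F := le_antisymm (hTm S hSI hSne) (hSm T hTI hTne)
  have hUne : (S ∪ T).Nonempty := hSne.mono Finset.subset_union_left
  have hUI : S ∪ T ⊆ I := Finset.union_subset hSI hTI
  -- α(S∪T) ≤ F λ(S∪T)
  have hsub := aQ_submod hπ hν S T
  have haS : aQ π ν S = F * lamQ lam S := by rw [hFdef]; exact fq_val_mul hlam hSne
  have haT : aQ π ν T = F * lamQ lam T := by rw [← hFT]; exact fq_val_mul hlam hTne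
  have haInt : F * lamQ lam (S ∩ T) ≤ aQ π ν (S ∩ T) := by
    rcases Finset.eq_empty_or_nonempty (S ∩ T) with h | h
    · rw [h, aQ_empty]; simp [lamQ]
    · exact fq_le_mul hlam h (hSm _ ((Finset.inter_subset_left).trans hSI) h)
  have hlamU := lamQ_union_inter (lam := lam) S T
  have e : F * lamQ lam (S ∪ T) + F * lamQ lam (S ∩ T) = F * lamQ lam S + F * lamQ lam T := by
    rw [← mul_add, ← mul_add, hlamU]
  have hkey : aQ π ν (S ∪ T) ≤ F * lamQ lam (S ∪ T) := by linarith
  have hfU : fQ π ν lam (S ∪ T) ∅ ≤ F := by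
    rw [fq_eq, div_le_iff₀ (lamQ_pos hlam hUne)]; linarith
  exact ⟨hUne, hUI, fun T' hT' hT'ne => hfU.trans (hSm T' hT' hT'ne)⟩

lemma topSet_isFmin (hπ : Pent π) (hν : ∀ j, 0 ≤ ν j) (hlam : ∀ r, 0 < lam r)
    {S₀ : Finset (Fin n)} (hS₀ : IsFmin π ν lam I S₀) :
    IsFmin π ν lam I (topSet π ν lam I) ∧ S₀ ⊆ topSet π ν lam I := by
  have hcond : ∀ S, IsFmin π ν lam I S →
      (S.Nonempty ∧ ∀ T ∈ I.powerset, T.Nonempty → fQ π ν lam S ∅ ≤ fQ π ν lam T ∅) := by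
    intro S hS
    exact ⟨hS.1, fun T hT hTne => hS.2.2 T (Finset.mem_powerset.1 hT) hTne⟩
  have hsub : S₀ ⊆ topSet π ν lam I := by
    have h1 : S₀ ∈ I.powerset := Finset.mem_powerset.2 hS₀.2.1
    rw [topSet, unionMin]
    have h2 := Finset.le_sup (f := fun S =>
      if S.Nonempty ∧ ∀ T ∈ I.powerset, T.Nonempty → fQ π ν lam S ∅ ≤ fQ π ν lam T ∅ then S
      else ∅) h1
    simp only [if_pos (hcond S₀ hS₀)] at h2
    exact h2
  have hP : topSet π ν lam I = ∅ ∨ IsFmin π ν lam I (topSet π ν lam I) := by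
    rw [topSet, unionMin]
    apply Finset.sup_induction (p := fun x => x = ∅ ∨ IsFmin π ν lam I x)
    · exact Or.inl rfl
    · rintro a (rfl | ha) b (rfl | hb)
      · simp
      · simpa using Or.inr hb
      · simpa using Or.inr ha
      · exact Or.inr (isFmin_union hπ hν hlam ha hb)
    · intro S hS
      by_cases h : S.Nonempty ∧ ∀ T ∈ I.powerset, T.Nonempty → fQ π ν lam S ∅ ≤ fQ π ν lam T ∅
      · rw [if_pos h]
        exact Or.inr ⟨h.1, Finset.mem_powerset.1 hS, fun T hT hTne =>
          h.2 T (Finset.mem_powerset.2 hT) hTne⟩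
      · rw [if_neg h]; exact Or.inl rfl
  rcases hP with h | h
  · exact absurd (h ▸ hsub) (by simpa using hS₀.1.ne_empty ∘ Finset.subset_empty.1)
  · exact ⟨h, hsub⟩

/-- If every nonempty subset of `I` has `F ≤ f`, then `F` lower-bounds `Uset`. -/
lemma uset_lb (hπ : Pent π) (hν : ∀ j, 0 ≤ ν j) (hlam : ∀ r, 0 < lam r) {F : ℝ}
    (hF : ∀ T ⊆ I, T.Nonempty → F * lamQ lam T ≤ aQ π ν T) {θ : ℝ}
    (hθ : θ ∈ Uset π ν lam I i) : F ≤ θ := by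
  obtain ⟨S, hiS, hSI, hSm⟩ := hθ
  have h1 := hSm ∅ (Finset.empty_subset I)
  rw [gg_empty] at h1
  have h2 := hF S hSI ⟨i, hiS⟩
  have h3 : 0 < lamQ lam S := lamQ_pos hlam ⟨i, hiS⟩
  simp only [gg] at h1
  nlinarith

lemma aQ_discount (π : Fin n → Fin m → ℝ) (ν : Fin m → ℝ) {S S₁ : Finset (Fin n)}
    (hdisj : Disjoint S S₁) :
    aQ π (fun j => ν j * ∏ r ∈ S₁, (1 - π r j)) S = aQ π ν (S ∪ S₁) - aQ π ν S₁ := by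
  rw [aQ_eq, aQ_eq, aQ_eq, ← Finset.sum_sub_distrib]
  refine Finset.sum_congr rfl fun j _ => ?_
  rw [Finset.prod_union hdisj]
  ring

lemma gg_discount (π : Fin n → Fin m → ℝ) (ν : Fin m → ℝ) (lam : Fin n → ℝ) (θ : ℝ)
    {S S₁ : Finset (Fin n)} (hdisj : Disjoint S S₁) :
    gg π (fun j => ν j * ∏ r ∈ S₁, (1 - π r j)) lam θ S
      = gg π ν lam θ (S ∪ S₁) - gg π ν lam θ S₁ := by
  simp only [gg, aQ_discount π ν hdisj, lamQ_union_disjoint hdisj]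
  ring

/-- Absorption: above the min value, unioning with the top set only helps. -/
lemma absorption (hπ : Pent π) (hν : ∀ j, 0 ≤ ν j) (hlam : ∀ r, 0 < lam r)
    {S₁ : Finset (Fin n)} {F θ : ℝ} (hS₁I : S₁ ⊆ I)
    (haS₁ : aQ π ν S₁ = F * lamQ lam S₁)
    (hmin : ∀ T ⊆ I, T.Nonempty → F * lamQ lam T ≤ aQ π ν T)
    (hθ : F ≤ θ) {S : Finset (Fin n)} (hS : S ⊆ I) :
    gg π ν lam θ (S ∪ S₁) ≤ gg π ν lam θ S := by
  have hsub := aQ_submod hπ hν S S₁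
  have haInt : F * lamQ lam (S ∩ S₁) ≤ aQ π ν (S ∩ S₁) := by
    rcases Finset.eq_empty_or_nonempty (S ∩ S₁) with h | h
    · rw [h, aQ_empty]; simp [lamQ]
    · exact hmin _ ((Finset.inter_subset_left).trans hS) h
  have hlamU := lamQ_union_inter (lam := lam) S S₁
  have hmono : lamQ lam S ≤ lamQ lam (S ∪ S₁) := lamQ_mono hlam Finset.subset_union_left
  have e0 : lamQ lam S₁ - lamQ lam (S ∩ S₁) = lamQ lam (S ∪ S₁) - lamQ lam S := by linarith
  have e1 : F * lamQ lam S₁ - F * lamQ lam (S ∩ S₁)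
      = F * (lamQ lam (S ∪ S₁) - lamQ lam S) := by rw [← mul_sub, e0]
  have e2 : θ * lamQ lam (S ∪ S₁) - θ * lamQ lam S
      = θ * (lamQ lam (S ∪ S₁) - lamQ lam S) := by ring
  have e3 : F * (lamQ lam (S ∪ S₁) - lamQ lam S) ≤ θ * (lamQ lam (S ∪ S₁) - lamQ lam S) :=
    mul_le_mul_of_nonneg_right hθ (by linarith)
  simp only [gg]
  linarith

/-- Main correspondence for a recursion step. -/
lemma uset_step (hπ : Pent π) (hν : ∀ j, 0 ≤ ν j) (hlam : ∀ r, 0 < lam r)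
    {S₁ : Finset (Fin n)} (hS₁ : IsFmin π ν lam I S₁) (hi : i ∉ S₁) (hiI : i ∈ I) :
    Uset π ν lam I i
      = Uset π (fun j => ν j * ∏ r ∈ S₁, (1 - π r j)) lam (I \ S₁) i := by
  obtain ⟨hS₁ne, hS₁I, hS₁m⟩ := hS₁
  set F := fQ π ν lam S₁ ∅ with hFdef
  set ν' := fun j => ν j * ∏ r ∈ S₁, (1 - π r j) with hν'def
  have hν' : ∀ j, 0 ≤ ν' j := fun j =>
    mul_nonneg (hν j) (prod_one_sub_nonneg hπ S₁ j)
  have haS₁ : aQ π ν S₁ = F * lamQ lam S₁ := fq_val_mul hlam hS₁ne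
  have hmin : ∀ T ⊆ I, T.Nonempty → F * lamQ lam T ≤ aQ π ν T := fun T hT hTne =>
    fq_le_mul hlam hTne (hS₁m T hT hTne)
  -- the primed value function is bounded below by F as well
  have hmin' : ∀ T ⊆ I \ S₁, T.Nonempty → F * lamQ lam T ≤ aQ π ν' T := by
    intro T hT hTne
    have hdisj : Disjoint T S₁ := (Finset.sdiff_disjoint).mono_left hT
    rw [hν'def, aQ_discount π ν hdisj]
    have hUsub : T ∪ S₁ ⊆ I := Finset.union_subset (hT.trans (Finset.sdiff_subset)) hS₁I
    have h1 := hmin (T ∪ S₁) hUsub (hS₁ne.mono Finset.subset_union_right)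
    have h2 := lamQ_union_disjoint (lam := lam) hdisj
    have h3 : F * lamQ lam (T ∪ S₁) = F * lamQ lam T + F * lamQ lam S₁ := by rw [h2]; ring
    linarith
  ext θ
  simp only [Uset, Set.mem_setOf_eq]
  constructor
  · intro hθ
    have hFθ : F ≤ θ := uset_lb hπ hν hlam hmin hθ
    obtain ⟨S, hiS, hSI, hSm⟩ := hθ
    refine ⟨S \ S₁, Finset.mem_sdiff.2 ⟨hiS, hi⟩, Finset.sdiff_subset_sdiff hSI (le_refl S₁),
      fun T hT => ?_⟩
    have hdisjS : Disjoint (S \ S₁) S₁ := Finset.sdiff_disjoint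
    have hdisjT : Disjoint T S₁ := (Finset.sdiff_disjoint).mono_left hT
    rw [gg_discount π ν lam θ hdisjS, gg_discount π ν lam θ hdisjT]
    have h1 : S \ S₁ ∪ S₁ = S ∪ S₁ := Finset.sdiff_union_self_eq_union
    rw [h1]
    have h2 : gg π ν lam θ (S ∪ S₁) ≤ gg π ν lam θ S :=
      absorption hπ hν hlam hS₁I haS₁ hmin hFθ hSI
    have h3 : gg π ν lam θ S ≤ gg π ν lam θ (T ∪ S₁) :=
      hSm _ (Finset.union_subset (hT.trans Finset.sdiff_subset) hS₁I)
    linarith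
  · intro hθ
    have hFθ : F ≤ θ := uset_lb hπ hν' hlam hmin' hθ
    obtain ⟨S', hiS', hS'I, hS'm⟩ := hθ
    have hdisjS' : Disjoint S' S₁ := (Finset.sdiff_disjoint).mono_left hS'I
    refine ⟨S' ∪ S₁, Finset.mem_union_left _ hiS',
      Finset.union_subset (hS'I.trans Finset.sdiff_subset) hS₁I, fun T hT => ?_⟩
    have hdisjT : Disjoint (T \ S₁) S₁ := Finset.sdiff_disjoint
    have h1 : gg π ν lam θ (T ∪ S₁) ≤ gg π ν lam θ T :=
      absorption hπ hν hlam hS₁I haS₁ hmin hFθ hT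
    have h2 := hS'm (T \ S₁) (Finset.sdiff_subset_sdiff hT (le_refl S₁))
    rw [gg_discount π ν lam θ hdisjS', gg_discount π ν lam θ hdisjT] at h2
    have h3 : T \ S₁ ∪ S₁ = T ∪ S₁ := Finset.sdiff_union_self_eq_union
    rw [h3] at h2
    linarith

/-- The rate algorithm computes `max 0 (1 - Θ)`. -/
lemma alg_eq (hπ : Pent π) (hlam : ∀ r, 0 < lam r) :
    ∀ (fuel : ℕ) (I : Finset (Fin n)) (ν : Fin m → ℝ), (∀ j, 0 ≤ ν j) → i ∈ I →
      I.card ≤ fuel → rateAux lam π fuel I ν i = max 0 (1 - ThetaI π ν lam I i) := by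
  intro fuel
  induction fuel with
  | zero =>
    intro I ν hν hiI hcard
    rw [Nat.le_zero, Finset.card_eq_zero] at hcard
    subst hcard
    exact absurd hiI (Finset.notMem_empty i)
  | succ fuel IH =>
    intro I ν hν hiI hcard
    by_cases hbig : ∀ S ∈ I.powerset, S.Nonempty → 1 ≤ fQ π ν lam S ∅
    · have hres : rateAux lam π (fuel + 1) I ν i = 0 := by
        simp only [rateAux]; rw [if_pos hbig]
      rw [hres]
      have hΘ : (1:ℝ) ≤ ThetaI π ν lam I i := by
        refine uset_lb hπ hν hlam (fun T hT hTne => ?_) (theta_mem hπ hν hlam hiI)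
        exact fq_le_mul hlam hTne (hbig T (Finset.mem_powerset.2 hT) hTne)
      rw [max_eq_left (by linarith)]
    · push_neg at hbig
      obtain ⟨Sb, hSbp, hSbne, hSblt⟩ := hbig
      have hSbI : Sb ⊆ I := Finset.mem_powerset.1 hSbp
      -- get an f-minimizer
      have hfilne : (I.powerset.filter fun S => S.Nonempty).Nonempty :=
        ⟨Sb, Finset.mem_filter.2 ⟨hSbp, hSbne⟩⟩
      obtain ⟨S₀, hS₀mem, hS₀min⟩ :=
        Finset.exists_min_image _ (fun S => fQ π ν lam S ∅) hfilne
      have hS₀fmin : IsFmin π ν lam I S₀ :=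
        ⟨(Finset.mem_filter.1 hS₀mem).2, Finset.mem_powerset.1 (Finset.mem_filter.1 hS₀mem).1,
          fun T hT hTne => hS₀min T (Finset.mem_filter.2 ⟨Finset.mem_powerset.2 hT, hTne⟩)⟩
      obtain ⟨htopfmin, -⟩ := topSet_isFmin hπ hν hlam hS₀fmin
      set Stop := topSet π ν lam I with hStopdef
      set F := fQ π ν lam Stop ∅ with hFdef
      have hFlt1 : F < 1 := lt_of_le_of_lt (htopfmin.2.2 Sb hSbI hSbne) hSblt
      have hmin : ∀ T ⊆ I, T.Nonempty → F * lamQ lam T ≤ aQ π ν T := fun T hT hTne =>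
        fq_le_mul hlam hTne (htopfmin.2.2 T hT hTne)
      have haStop : aQ π ν Stop = F * lamQ lam Stop := fq_val_mul hlam htopfmin.1
      have hnotbig : ¬ ∀ S ∈ I.powerset, S.Nonempty → 1 ≤ fQ π ν lam S ∅ := by
        push_neg; exact ⟨Sb, hSbp, hSbne, hSblt⟩
      by_cases hit : i ∈ Stop
      · have hres : rateAux lam π (fuel + 1) I ν i = 1 - F := by
          simp only [rateAux]; rw [if_neg hnotbig, if_pos hit]
        rw [hres]
        have hΘF : ThetaI π ν lam I i = F := by
          have hle : ThetaI π ν lam I i ≤ F := by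
            refine csInf_le ⟨0, fun x hx => uset_nonneg hπ hν hlam hx⟩ ?_
            refine ⟨Stop, hit, htopfmin.2.1, fun T hT => ?_⟩
            have h1 : gg π ν lam F Stop = 0 := by simp only [gg]; linarith
            have h2 : 0 ≤ gg π ν lam F T := by
              rcases Finset.eq_empty_or_nonempty T with h | h
              · rw [h, gg_empty]
              · have := hmin T hT h
                simp only [gg]; linarith
            linarith
          have hge : F ≤ ThetaI π ν lam I i :=
            uset_lb hπ hν hlam hmin (theta_mem hπ hν hlam hiI)
          linarith
        rw [hΘF, max_eq_right (by linarith)]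
      · have hres : rateAux lam π (fuel + 1) I ν i
            = rateAux lam π fuel (I \ Stop) (fun j => ν j * ∏ r ∈ Stop, (1 - π r j)) i := by
          simp only [rateAux]; rw [if_neg hnotbig, if_neg hit]
        rw [hres]
        have hiI' : i ∈ I \ Stop := Finset.mem_sdiff.2 ⟨hiI, hit⟩
        have hν' : ∀ j, 0 ≤ ν j * ∏ r ∈ Stop, (1 - π r j) := fun j =>
          mul_nonneg (hν j) (prod_one_sub_nonneg hπ Stop j)
        have hcard' : (I \ Stop).card ≤ fuel := by
          have h1 : (I \ Stop).card = I.card - Stop.card := Finset.card_sdiff_of_subset htopfmin.2.1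
          have h2 : 1 ≤ Stop.card := Finset.card_pos.2 htopfmin.1
          omega
        rw [IH (I \ Stop) _ hν' hiI' hcard']
        have husets := uset_step hπ hν hlam htopfmin hit hiI
        rw [ThetaI, ThetaI, husets]

/-- Top-level bridge. -/
lemma rateQ_eq_theta (π : Fin n → Fin m → ℝ) (μ : Fin m → ℝ) (lam : Fin n → ℝ) (i : Fin n)
    (hπ : Pent π) (hμ : ∀ j, 0 ≤ μ j) (hlam : ∀ r, 0 < lam r) :
    rateQ lam μ π i = max 0 (1 - ThetaI π μ lam Finset.univ i) := by
  rw [rateQ]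
  exact alg_eq hπ hlam (n + 1) Finset.univ μ hμ (Finset.mem_univ i)
    (by simpa using Nat.le_succ n)

end part1
end QL
namespace QL
open scoped Classical
variable {n m : ℕ}

lemma simplex_bounds {v : Fin m → ℝ} (hv : inSimplex v) (j : Fin m) :
    0 ≤ v j ∧ v j ≤ 1 := by
  refine ⟨hv.1 j, ?_⟩
  have h1 : v j ≤ ∑ k, v k :=
    Finset.single_le_sum (fun k _ => hv.1 k) (Finset.mem_univ j)
  rw [hv.2] at h1
  exact h1

section segment

variable (p : Fin n → Fin m → ℝ) (i : Fin n) (q q' : Fin m → ℝ)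

/-- The strategy profile along the segment. -/
noncomputable def Pseg (t : ℝ) : Fin n → Fin m → ℝ :=
  Function.update p i fun j => t * q j + (1 - t) * q' j

variable {p i q q'}

lemma pent_Pseg (hp : ∀ r, inSimplex (p r)) (hq : inSimplex q) (hq' : inSimplex q')
    {t : ℝ} (h0 : 0 ≤ t) (h1 : t ≤ 1) : Pent (Pseg p i q q' t) := by
  intro r j
  by_cases hr : r = i
  · subst hr
    simp only [Pseg, Function.update_self]
    have hqj := simplex_bounds hq j
    have hq'j := simplex_bounds hq' j
    constructor
    · have := mul_nonneg h0 hqj.1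
      have := mul_nonneg (by linarith : (0:ℝ) ≤ 1 - t) hq'j.1
      linarith
    · nlinarith
  · simp only [Pseg, Function.update_of_ne hr]
    exact simplex_bounds (hp r) j

lemma aQ_Pseg_const (μ : Fin m → ℝ) {S : Finset (Fin n)} (hiS : i ∉ S) (t t' : ℝ) :
    aQ (Pseg p i q q' t) μ S = aQ (Pseg p i q q' t') μ S := by
  rw [aQ_eq, aQ_eq]
  refine Finset.sum_congr rfl fun j _ => ?_
  have : ∀ s : ℝ, ∏ r ∈ S, (1 - Pseg p i q q' s r j) = ∏ r ∈ S, (1 - p r j) := by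
    intro s
    refine Finset.prod_congr rfl fun r hr => ?_
    have hri : r ≠ i := fun h => hiS (h ▸ hr)
    rw [Pseg, Function.update_of_ne hri]
  rw [this t, this t']

lemma aQ_Pseg_affine (μ : Fin m → ℝ) (S : Finset (Fin n)) (t : ℝ) :
    aQ (Pseg p i q q' t) μ S
      = (1 - t) * aQ (Pseg p i q q' 0) μ S + t * aQ (Pseg p i q q' 1) μ S := by
  rw [aQ_eq, aQ_eq, aQ_eq, Finset.mul_sum, Finset.mul_sum, ← Finset.sum_add_distrib]
  refine Finset.sum_congr rfl fun j _ => ?_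
  suffices h : ∏ r ∈ S, (1 - Pseg p i q q' t r j)
      = (1 - t) * ∏ r ∈ S, (1 - Pseg p i q q' 0 r j)
        + t * ∏ r ∈ S, (1 - Pseg p i q q' 1 r j) by
    rw [h]; ring
  by_cases hiS : i ∈ S
  · have hins : ∀ s : ℝ, ∏ r ∈ S, (1 - Pseg p i q q' s r j)
        = (1 - (s * q j + (1 - s) * q' j)) * ∏ r ∈ S.erase i, (1 - p r j) := by
      intro s
      rw [← Finset.mul_prod_erase S _ hiS]
      congr 1
      · rw [Pseg, Function.update_self]
      · refine Finset.prod_congr rfl fun r hr => ?_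
        rw [Pseg, Function.update_of_ne (Finset.ne_of_mem_erase hr)]
    rw [hins t, hins 0, hins 1]
    ring
  · have h0 : ∀ s : ℝ, ∏ r ∈ S, (1 - Pseg p i q q' s r j)
        = ∏ r ∈ S, (1 - p r j) := by
      intro s
      refine Finset.prod_congr rfl fun r hr => ?_
      have hri : r ≠ i := fun h => hiS (h ▸ hr)
      rw [Pseg, Function.update_of_ne hri]
    rw [h0 t, h0 0, h0 1]
    ring

lemma gg_Pseg_affine (μ : Fin m → ℝ) (lam : Fin n → ℝ) (θ : ℝ) (S : Finset (Fin n)) (t : ℝ) :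
    gg (Pseg p i q q' t) μ lam θ S
      = (1 - t) * gg (Pseg p i q q' 0) μ lam θ S + t * gg (Pseg p i q q' 1) μ lam θ S := by
  simp only [gg, aQ_Pseg_affine (p := p) (i := i) (q := q) (q' := q') μ S t]
  ring

lemma gg_Pseg_combo (μ : Fin m → ℝ) (lam : Fin n → ℝ) (θ : ℝ) (S : Finset (Fin n))
    {a b s : ℝ} :
    gg (Pseg p i q q' ((1 - s) * a + s * b)) μ lam θ S
      = (1 - s) * gg (Pseg p i q q' a) μ lam θ S + s * gg (Pseg p i q q' b) μ lam θ S := by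
  rw [gg_Pseg_affine μ lam θ S ((1 - s) * a + s * b), gg_Pseg_affine μ lam θ S a,
    gg_Pseg_affine μ lam θ S b]
  ring

variable (μ : Fin m → ℝ) (lam : Fin n → ℝ)

/-- Quasiconcavity of `t ↦ Θ(t)` along the segment. -/
lemma theta_Pseg_qc (hp : ∀ r, inSimplex (p r)) (hq : inSimplex q) (hq' : inSimplex q')
    (hμ : ∀ j, 0 ≤ μ j) (hlam : ∀ r, 0 < lam r)
    {a t b : ℝ} (ha : 0 ≤ a) (hat : a ≤ t) (htb : t ≤ b) (hb : b ≤ 1) :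
    min (ThetaI (Pseg p i q q' a) μ lam Finset.univ i)
        (ThetaI (Pseg p i q q' b) μ lam Finset.univ i)
      ≤ ThetaI (Pseg p i q q' t) μ lam Finset.univ i := by
  by_contra hcon
  push_neg at hcon
  set θ' := ThetaI (Pseg p i q q' t) μ lam Finset.univ i with hθ'def
  have h01 : (0:ℝ) ≤ 1 := by norm_num
  have hpa : Pent (Pseg p i q q' a) := pent_Pseg hp hq hq' ha (by linarith)
  have hpb : Pent (Pseg p i q q' b) := pent_Pseg hp hq hq' (by linarith) hb
  have hpt : Pent (Pseg p i q q' t) := pent_Pseg hp hq hq' (by linarith) (by linarith)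
  have hmem : θ' ∈ Uset (Pseg p i q q' t) μ lam Finset.univ i :=
    theta_mem hpt hμ hlam (Finset.mem_univ i)
  have hθa : θ' < ThetaI (Pseg p i q q' a) μ lam Finset.univ i := (lt_min_iff.1 hcon).1
  have hθb : θ' < ThetaI (Pseg p i q q' b) μ lam Finset.univ i := (lt_min_iff.1 hcon).2
  have hnA : θ' ∉ Uset (Pseg p i q q' a) μ lam Finset.univ i := fun h => by
    have := (theta_le_iff hpa hμ hlam (Finset.mem_univ i)).1 h
    linarith
  have hnB : θ' ∉ Uset (Pseg p i q q' b) μ lam Finset.univ i := fun h => by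
    have := (theta_le_iff hpb hμ hlam (Finset.mem_univ i)).1 h
    linarith
  obtain ⟨T0, hT0mem, hT0min⟩ := Finset.exists_min_image
    ((Finset.univ.powerset).filter fun T : Finset (Fin n) => i ∉ T)
    (fun T => gg (Pseg p i q q' a) μ lam θ' T)
    ⟨∅, Finset.mem_filter.2 ⟨Finset.empty_mem_powerset _, Finset.notMem_empty i⟩⟩
  have hiT0 : i ∉ T0 := (Finset.mem_filter.1 hT0mem).2
  set B := gg (Pseg p i q q' a) μ lam θ' T0 with hBdef
  have hggconst : ∀ (x y : ℝ) (T : Finset (Fin n)), i ∉ T →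
      gg (Pseg p i q q' x) μ lam θ' T = gg (Pseg p i q q' y) μ lam θ' T := by
    intro x y T hiT
    simp only [gg]
    rw [aQ_Pseg_const μ hiT x y]
  have hstrict : ∀ x : ℝ, θ' ∉ Uset (Pseg p i q q' x) μ lam Finset.univ i →
      ∀ S, i ∈ S → B < gg (Pseg p i q q' x) μ lam θ' S := by
    intro x hnx S hiS
    obtain ⟨M, hMI, hMm⟩ := exists_global_min (Pseg p i q q' x) μ lam Finset.univ θ'
    have hiM : i ∉ M := fun hiM => hnx ⟨M, hiM, hMI, hMm⟩
    have hBM : B ≤ gg (Pseg p i q q' x) μ lam θ' M := by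
      rw [hggconst x a M hiM]
      exact hT0min M (Finset.mem_filter.2 ⟨Finset.mem_powerset.2 (Finset.subset_univ M), hiM⟩)
    have hMS : gg (Pseg p i q q' x) μ lam θ' M ≤ gg (Pseg p i q q' x) μ lam θ' S :=
      hMm S (Finset.subset_univ S)
    rcases eq_or_lt_of_le hMS with heq | hlt
    · exfalso
      refine hnx ⟨S, hiS, Finset.subset_univ S, fun T hT => ?_⟩
      rw [← heq]
      exact hMm T hT
    · linarith
  have hsa := hstrict a hnA
  have hsb := hstrict b hnB
  rcases eq_or_lt_of_le (hat.trans htb) with haeqb | hab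
  · have hta : t = a := le_antisymm (haeqb ▸ htb) hat
    rw [hta] at hθ'def
    exact absurd hθa (by rw [hθ'def]; exact lt_irrefl _)
  · set s := (t - a) / (b - a) with hsdef
    have hbapos : 0 < b - a := by linarith
    have hs0 : 0 ≤ s := div_nonneg (by linarith) hbapos.le
    have hs1 : s ≤ 1 := by
      rw [hsdef, div_le_one hbapos]; linarith
    have hts : (1 - s) * a + s * b = t := by
      field_simp [hsdef]
      rw [hsdef]; linear_combination div_mul_cancel₀ (t - a) hbapos.ne'
    obtain ⟨S, hiS, hSI, hSm⟩ := hmem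
    have h1 : gg (Pseg p i q q' t) μ lam θ' S ≤ gg (Pseg p i q q' t) μ lam θ' T0 :=
      hSm T0 (Finset.subset_univ T0)
    have h2 : gg (Pseg p i q q' t) μ lam θ' T0 = B := hggconst t a T0 hiT0
    have hA1 := hsa S hiS
    have hA2 := hsb S hiS
    have h3 : B < gg (Pseg p i q q' t) μ lam θ' S := by
      rw [← hts, gg_Pseg_combo μ lam θ' S]
      rcases eq_or_lt_of_le hs0 with hseq | hspos
      · rw [← hseq]; simpa using hA1
      · have e1 : 0 < s * (gg (Pseg p i q q' b) μ lam θ' S - B) :=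
          mul_pos hspos (by linarith)
        have e2 : 0 ≤ (1 - s) * (gg (Pseg p i q q' a) μ lam θ' S - B) :=
          mul_nonneg (by linarith) (by linarith)
        nlinarith
    linarith

end segment
end QL
namespace QL
open scoped Classical
variable {n m : ℕ}

/-- At `Θ`, some minimizer containing `i` is tied with a set of strictly smaller weight. -/
lemma exists_tight {π : Fin n → Fin m → ℝ} {ν : Fin m → ℝ} {lam : Fin n → ℝ}
    {I : Finset (Fin n)} {i : Fin n} (hπ : Pent π) (hν : ∀ j, 0 ≤ ν j)
    (hlam : ∀ r, 0 < lam r) (hiI : i ∈ I) :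
    ∃ S T, i ∈ S ∧ MinOn π ν lam I (ThetaI π ν lam I i) S ∧ T ⊆ I ∧
      lamQ lam T < lamQ lam S ∧
      gg π ν lam (ThetaI π ν lam I i) T = gg π ν lam (ThetaI π ν lam I i) S := by
  obtain ⟨S, hiS, hSmin⟩ := theta_mem hπ hν hlam hiI
  set θ := ThetaI π ν lam I i with hθdef
  refine ⟨S, ?_⟩
  by_contra hcon
  push_neg at hcon
  set bad := I.powerset.filter (fun T => lamQ lam T < lamQ lam S) with hbaddef
  have hbadne : bad.Nonempty := by
    refine ⟨∅, Finset.mem_filter.2 ⟨Finset.empty_mem_powerset I, ?_⟩⟩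
    have : lamQ lam ∅ = 0 := by simp [lamQ]
    rw [this]
    exact lamQ_pos hlam ⟨i, hiS⟩
  have hstrict : ∀ T ∈ bad, gg π ν lam θ S < gg π ν lam θ T := by
    intro T hT
    rcases Finset.mem_filter.1 hT with ⟨hTp, hTlam⟩
    have h1 := hSmin.2 T (Finset.mem_powerset.1 hTp)
    rcases eq_or_lt_of_le h1 with heq | hlt
    · exact absurd heq.symm (hcon T hiS hSmin (Finset.mem_powerset.1 hTp) hTlam)
    · exact hlt
  set δ := (bad.image fun T => (gg π ν lam θ T - gg π ν lam θ S) / (lamQ lam S - lamQ lam T)).min'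
    (hbadne.image _) with hδdef
  have hδpos : 0 < δ := by
    rw [hδdef]
    rw [Finset.lt_min'_iff]
    intro v hv
    obtain ⟨T, hT, rfl⟩ := Finset.mem_image.1 hv
    have h1 := hstrict T hT
    have h2 := (Finset.mem_filter.1 hT).2
    exact div_pos (by linarith) (by linarith)
  have hmem : θ - δ ∈ Uset π ν lam I i := by
    refine ⟨S, hiS, hSmin.1, fun T hT => ?_⟩
    have hΔ : ∀ X : Finset (Fin n), gg π ν lam (θ - δ) X = gg π ν lam θ X + δ * lamQ lam X := by
      intro X; simp only [gg]; ring
    rw [hΔ S, hΔ T]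
    rcases le_or_gt (lamQ lam S) (lamQ lam T) with h | h
    · have h1 := hSmin.2 T hT
      nlinarith
    · have hTbad : T ∈ bad := Finset.mem_filter.2 ⟨Finset.mem_powerset.2 hT, h⟩
      have h2 : δ ≤ (gg π ν lam θ T - gg π ν lam θ S) / (lamQ lam S - lamQ lam T) :=
        Finset.min'_le _ _ (Finset.mem_image_of_mem _ hTbad)
      rw [le_div_iff₀ (by linarith)] at h2
      nlinarith
  have h9 := csInf_le ⟨0, fun x hx => uset_nonneg hπ hν hlam hx⟩ hmem
  have h10 : θ ≤ θ - δ := h9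
  linarith

/-- Sign transfer for affine functions with no root in the interval. -/
lemma sign_transfer {r : ℝ → ℝ} (haff : ∀ t, r t = (1 - t) * r 0 + t * r 1)
    {x y : ℝ} (hroot : r 0 ≠ r 1 → r 0 / (r 0 - r 1) ∈ Set.Ioo x y → False)
    {t₀ t₁ : ℝ} (ht₀ : t₀ ∈ Set.Ioo x y) (ht₁ : t₁ ∈ Set.Ioo x y)
    (h : r t₀ ≤ 0) : r t₁ ≤ 0 := by
  by_cases heq : r 0 = r 1
  · have e : ∀ t : ℝ, r t = r 0 := by intro t; rw [haff t, ← heq]; ring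
    rw [e t₁]; rw [e t₀] at h; exact h
  · by_contra hpos
    push_neg at hpos
    set z := r 0 / (r 0 - r 1) with hzdef
    have hD : r 0 - r 1 ≠ 0 := sub_ne_zero.2 heq
    have hform : ∀ t : ℝ, r t = (z - t) * (r 0 - r 1) := by
      intro t
      rw [haff t, hzdef]
      field_simp
      ring
    have h0 : (z - t₀) * (r 0 - r 1) ≤ 0 := by rw [← hform]; exact h
    have h1 : 0 < (z - t₁) * (r 0 - r 1) := by rw [← hform]; exact hpos
    rcases lt_or_gt_of_ne hD with hDneg | hDpos
    · -- r 0 - r 1 < 0 : z ≥ t₀ , z < t₁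
      have e0 : t₀ ≤ z := by nlinarith
      have e1 : z < t₁ := by nlinarith
      exact hroot heq ⟨lt_of_lt_of_le ht₀.1 e0, lt_trans e1 ht₁.2⟩
    · have e0 : z ≤ t₀ := by nlinarith
      have e1 : t₁ < z := by nlinarith
      exact hroot heq ⟨lt_trans ht₁.1 e1, lt_of_le_of_lt e0 ht₀.2⟩

/-- An affine lower bound on an open interval extends to its endpoints. -/
lemma affine_ge_closure {g : ℝ → ℝ} (hg : ∀ t, g t = (1 - t) * g 0 + t * g 1)
    {x y c : ℝ} (hxy : x < y) (h : ∀ t ∈ Set.Ioo x y, c ≤ g t) :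
    c ≤ g x ∧ c ≤ g y := by
  set B := g 1 - g 0 with hBdef
  have hform : ∀ s t : ℝ, g t = g s + (t - s) * B := by
    intro s t; rw [hg t, hg s, hBdef]; ring
  constructor
  · refine le_of_forall_pos_le_add fun ε hε => ?_
    set η := min (y - x) (ε / (1 + |B|)) with hηdef
    have hηpos : 0 < η := lt_min (by linarith) (div_pos hε (by positivity))
    set t := x + η / 2 with htdef
    have ht : t ∈ Set.Ioo x y := by
      constructor
      · rw [htdef]; linarith
      · have : η ≤ y - x := min_le_left _ _
        rw [htdef]; linarith
    have h1 := h t ht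
    have h2 : g t = g x + (η / 2) * B := by rw [hform x t, htdef]; ring
    have h3 : (η / 2) * B ≤ ε := by
      have hb : |B| * η ≤ |B| * (ε / (1 + |B|)) :=
        mul_le_mul_of_nonneg_left (min_le_right _ _) (abs_nonneg B)
      have hb2 : |B| * (ε / (1 + |B|)) ≤ ε := by
        rw [mul_div_assoc']
        rw [div_le_iff₀ (by positivity)]
        nlinarith [abs_nonneg B]
      have hb3 : (η / 2) * B ≤ (η / 2) * |B| :=
        mul_le_mul_of_nonneg_left (le_abs_self B) (by linarith)
      nlinarith [abs_nonneg B]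
    linarith
  · refine le_of_forall_pos_le_add fun ε hε => ?_
    set η := min (y - x) (ε / (1 + |B|)) with hηdef
    have hηpos : 0 < η := lt_min (by linarith) (div_pos hε (by positivity))
    set t := y - η / 2 with htdef
    have ht : t ∈ Set.Ioo x y := by
      constructor
      · have : η ≤ y - x := min_le_left _ _
        rw [htdef]; linarith
      · rw [htdef]; linarith
    have h1 := h t ht
    have h2 : g t = g y - (η / 2) * B := by rw [hform y t, htdef]; ring
    have h3 : -((η / 2) * B) ≤ ε := by
      have hb : |B| * η ≤ |B| * (ε / (1 + |B|)) :=
        mul_le_mul_of_nonneg_left (min_le_right _ _) (abs_nonneg B)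
      have hb2 : |B| * (ε / (1 + |B|)) ≤ ε := by
        rw [mul_div_assoc']
        rw [div_le_iff₀ (by positivity)]
        nlinarith [abs_nonneg B]
      have hb3 : -((η / 2) * B) ≤ (η / 2) * |B| := by
        have := neg_abs_le B
        nlinarith [abs_nonneg B]
      nlinarith [abs_nonneg B]
    linarith

lemma affine_le_closure {g : ℝ → ℝ} (hg : ∀ t, g t = (1 - t) * g 0 + t * g 1)
    {x y c : ℝ} (hxy : x < y) (h : ∀ t ∈ Set.Ioo x y, g t ≤ c) :
    g x ≤ c ∧ g y ≤ c := by
  have hneg : ∀ t : ℝ, (fun s => -g s) t = (1 - t) * (fun s => -g s) 0 + t * (fun s => -g s) 1 := by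
    intro t; simp only; rw [hg t]; ring
  obtain ⟨h1, h2⟩ := affine_ge_closure (g := fun s => -g s) hneg hxy (c := -c)
    (fun t ht => by simp only [neg_le_neg_iff]; exact h t ht)
  simp only [neg_le_neg_iff] at h1 h2
  exact ⟨h1, h2⟩

/-- endpoint matching: a function agreeing with an affine map on an open interval and
continuous (in the `ε`-`δ` sense within `[0,1]`) at an approachable endpoint agrees there. -/
lemma endpoint_eq {f g : ℝ → ℝ} {x y e : ℝ}
    (hfg : ∀ t ∈ Set.Ioo x y, f t = g t)
    (hg : ∀ t, g t = (1 - t) * g 0 + t * g 1)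
    (happrox : ∀ η > (0:ℝ), ∃ t, t ∈ Set.Ioo x y ∧ t ∈ Set.Icc (0:ℝ) 1 ∧ |t - e| < η)
    (hcontf : ∀ ε > (0:ℝ), ∃ δ > (0:ℝ), ∀ t' ∈ Set.Icc (0:ℝ) 1, |t' - e| < δ →
      |f t' - f e| ≤ ε) :
    f e = g e := by
  set B := g 1 - g 0 with hBdef
  have hform : ∀ s t : ℝ, g t = g s + (t - s) * B := by
    intro s t; rw [hg t, hg s, hBdef]; ring
  have hkey : ∀ ε > (0:ℝ), |f e - g e| ≤ 2 * ε := by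
    intro ε hε
    obtain ⟨δ, hδ, hδp⟩ := hcontf ε hε
    set η := min δ (ε / (1 + |B|)) with hηdef
    have hηpos : 0 < η := lt_min hδ (div_pos hε (by positivity))
    obtain ⟨t, htIoo, htIcc, hte⟩ := happrox η hηpos
    have h1 : |f t - f e| ≤ ε := hδp t htIcc (lt_of_lt_of_le hte (min_le_left _ _))
    have h2 : f t = g t := hfg t htIoo
    have h3 : |g t - g e| ≤ ε := by
      rw [hform e t]
      have e1 : |g e + (t - e) * B - g e| = |t - e| * |B| := by
        rw [show g e + (t - e) * B - g e = (t - e) * B by ring, abs_mul]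
      rw [e1]
      have e2 : |t - e| ≤ ε / (1 + |B|) := le_of_lt (lt_of_lt_of_le hte (min_le_right _ _))
      have e3 : |t - e| * |B| ≤ (ε / (1 + |B|)) * |B| :=
        mul_le_mul_of_nonneg_right e2 (abs_nonneg B)
      have e4 : (ε / (1 + |B|)) * |B| ≤ ε := by
        rw [div_mul_eq_mul_div, div_le_iff₀ (by positivity)]
        nlinarith [abs_nonneg B]
      linarith
    calc |f e - g e| = |(f e - f t) + (g t - g e)| := by rw [h2]; ring_nf
      _ ≤ |f e - f t| + |g t - g e| := abs_add_le _ _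
      _ ≤ ε + ε := by
          rw [abs_sub_comm] at h1
          linarith
      _ = 2 * ε := by ring
  by_contra hne
  have habs : 0 < |f e - g e| := abs_pos.2 (sub_ne_zero.2 hne)
  have := hkey (|f e - g e| / 4) (by linarith)
  linarith

end QL
namespace QL
open scoped Classical
variable {n m : ℕ}

section segment2
variable {p : Fin n → Fin m → ℝ} {i : Fin n} {q q' : Fin m → ℝ}
  (μ : Fin m → ℝ) (lam : Fin n → ℝ)

lemma gg_Pseg_continuous (θ : ℝ) (X : Finset (Fin n)) :
    Continuous fun t' : ℝ => gg (Pseg p i q q' t') μ lam θ X := by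
  have he : (fun t' : ℝ => gg (Pseg p i q q' t') μ lam θ X)
      = fun t' : ℝ => (1 - t') * gg (Pseg p i q q' 0) μ lam θ X
        + t' * gg (Pseg p i q q' 1) μ lam θ X :=
    funext fun t' => gg_Pseg_affine μ lam θ X t'
  rw [he]
  fun_prop

variable {μ lam}

lemma theta_Pseg_usc (hp : ∀ r, inSimplex (p r)) (hq : inSimplex q) (hq' : inSimplex q')
    (hμ : ∀ j, 0 ≤ μ j) (hlam : ∀ r, 0 < lam r)
    {τ : ℝ} (hτ0 : 0 ≤ τ) (hτ1 : τ ≤ 1) {ε : ℝ} (hε : 0 < ε) :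
    ∃ δ > (0:ℝ), ∀ t', 0 ≤ t' → t' ≤ 1 → |t' - τ| < δ →
      ThetaI (Pseg p i q q' t') μ lam Finset.univ i
        ≤ ThetaI (Pseg p i q q' τ) μ lam Finset.univ i + ε := by
  have hpτ : Pent (Pseg p i q q' τ) := pent_Pseg hp hq hq' hτ0 hτ1
  set θ := ThetaI (Pseg p i q q' τ) μ lam Finset.univ i with hθdef
  obtain ⟨S, hiS, hSmin⟩ := theta_mem hpτ hμ hlam (Finset.mem_univ i)
  set fil := Finset.univ.powerset.filter
    (fun T => MinOn (Pseg p i q q' τ) μ lam Finset.univ θ T) with hfildef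
  set W := fil.sup id with hWdef
  have hsubW : ∀ T, MinOn (Pseg p i q q' τ) μ lam Finset.univ θ T → T ⊆ W := by
    intro T hT
    exact Finset.le_sup (f := id)
      (Finset.mem_filter.2 ⟨Finset.mem_powerset.2 (Finset.subset_univ T), hT⟩)
  have hWP : W = ∅ ∨ MinOn (Pseg p i q q' τ) μ lam Finset.univ θ W := by
    rw [hWdef]
    apply Finset.sup_induction
      (p := fun x => x = ∅ ∨ MinOn (Pseg p i q q' τ) μ lam Finset.univ θ x)
    · exact Or.inl rfl
    · rintro a (rfl | ha) b (rfl | hb)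
      · simp
      · simpa using Or.inr hb
      · simpa using Or.inr ha
      · exact Or.inr (minOn_union hpτ hμ ha hb)
    · intro T hT
      exact Or.inr (Finset.mem_filter.1 hT).2
  have hiW : i ∈ W := hsubW S hSmin hiS
  have hWmin : MinOn (Pseg p i q q' τ) μ lam Finset.univ θ W := by
    rcases hWP with h | h
    · rw [h] at hiW; exact absurd hiW (Finset.notMem_empty i)
    · exact h
  set badf := Finset.univ.powerset.filter
    (fun T => ¬ MinOn (Pseg p i q q' τ) μ lam Finset.univ θ T) with hbadfdef
  have hbadstrict : ∀ T ∈ badf, gg (Pseg p i q q' τ) μ lam θ W < gg (Pseg p i q q' τ) μ lam θ T := by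
    intro T hT
    have hTn := (Finset.mem_filter.1 hT).2
    have h1 := hWmin.2 T (Finset.subset_univ T)
    rcases eq_or_lt_of_le h1 with heq | hlt
    · exfalso
      refine hTn ⟨Finset.subset_univ T, fun T' hT' => ?_⟩
      rw [← heq]; exact hWmin.2 T' hT'
    · exact hlt
  obtain ⟨ε', hε'pos, hε'le, hkey⟩ : ∃ ε' : ℝ, 0 < ε' ∧ ε' ≤ ε ∧ ∀ T ∈ badf,
      ε' * (lamQ lam T - lamQ lam W)
        < gg (Pseg p i q q' τ) μ lam θ T - gg (Pseg p i q q' τ) μ lam θ W := by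
    by_cases hbne : badf.Nonempty
    · set m₀ := (badf.image fun T =>
        gg (Pseg p i q q' τ) μ lam θ T - gg (Pseg p i q q' τ) μ lam θ W).min'
        (hbne.image _) with hm₀def
      have hm₀pos : 0 < m₀ := by
        rw [hm₀def, Finset.lt_min'_iff]
        intro v hv
        obtain ⟨T, hT, rfl⟩ := Finset.mem_image.1 hv
        linarith [hbadstrict T hT]
      set L := lamQ lam Finset.univ + 1 with hLdef
      have hLpos : 0 < L := by
        have := lamQ_nonneg hlam (Finset.univ : Finset (Fin n))
        rw [hLdef]; linarith
      refine ⟨min ε (m₀ / L), lt_min hε (div_pos hm₀pos hLpos), min_le_left _ _, ?_⟩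
      intro T hT
      have h1 : m₀ ≤ gg (Pseg p i q q' τ) μ lam θ T - gg (Pseg p i q q' τ) μ lam θ W :=
        Finset.min'_le _ _ (Finset.mem_image_of_mem _ hT)
      have h2 : lamQ lam T - lamQ lam W < L := by
        have ha := lamQ_mono hlam (Finset.subset_univ T)
        have hb := lamQ_nonneg hlam W
        rw [hLdef]; linarith
      rcases le_or_gt (lamQ lam T - lamQ lam W) 0 with hc | hc
      · have h3 : min ε (m₀ / L) * (lamQ lam T - lamQ lam W) ≤ 0 :=
          mul_nonpos_of_nonneg_of_nonpos (le_of_lt (lt_min hε (div_pos hm₀pos hLpos))) hc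
        linarith
      · have h3 : min ε (m₀ / L) * (lamQ lam T - lamQ lam W)
            ≤ (m₀ / L) * (lamQ lam T - lamQ lam W) :=
          mul_le_mul_of_nonneg_right (min_le_right _ _) hc.le
        have h4 : (m₀ / L) * (lamQ lam T - lamQ lam W) < (m₀ / L) * L :=
          mul_lt_mul_of_pos_left h2 (div_pos hm₀pos hLpos)
        have h5 : (m₀ / L) * L = m₀ := div_mul_cancel₀ _ hLpos.ne'
        linarith
    · exact ⟨ε, hε, le_refl ε, fun T hT => absurd ⟨T, hT⟩ hbne⟩
  set θ' := θ + ε' with hθ'def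
  have hstrictτ : ∀ T : Finset (Fin n), T ≠ W →
      gg (Pseg p i q q' τ) μ lam θ' W < gg (Pseg p i q q' τ) μ lam θ' T := by
    intro T hTW
    have hΔ : ∀ X : Finset (Fin n), gg (Pseg p i q q' τ) μ lam θ' X
        = gg (Pseg p i q q' τ) μ lam θ X - ε' * lamQ lam X := by
      intro X; simp only [gg, hθ'def]; ring
    by_cases hTmin : MinOn (Pseg p i q q' τ) μ lam Finset.univ θ T
    · have hTW' : T ⊂ W := ssubset_of_subset_of_ne (hsubW T hTmin) hTW
      have hlamTW : lamQ lam T < lamQ lam W := lamQ_strict hlam hTW'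
      have heq : gg (Pseg p i q q' τ) μ lam θ T = gg (Pseg p i q q' τ) μ lam θ W :=
        le_antisymm (hTmin.2 W (Finset.subset_univ W)) (hWmin.2 T (Finset.subset_univ T))
      rw [hΔ, hΔ, heq]
      nlinarith
    · have hTbad : T ∈ badf :=
        Finset.mem_filter.2 ⟨Finset.mem_powerset.2 (Finset.subset_univ T), hTmin⟩
      have := hkey T hTbad
      rw [hΔ, hΔ]
      linarith
  -- open neighbourhood
  set V := ⋂ T ∈ (Finset.univ.powerset : Finset (Finset (Fin n))),
      {t' : ℝ | T ≠ W → gg (Pseg p i q q' t') μ lam θ' W < gg (Pseg p i q q' t') μ lam θ' T}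
    with hVdef
  have hVopen : IsOpen V := by
    rw [hVdef]
    refine isOpen_biInter_finset fun T _ => ?_
    by_cases hTW : T = W
    · have : {t' : ℝ | T ≠ W →
          gg (Pseg p i q q' t') μ lam θ' W < gg (Pseg p i q q' t') μ lam θ' T} = Set.univ := by
        ext t'; simp [hTW]
      rw [this]; exact isOpen_univ
    · have : {t' : ℝ | T ≠ W →
          gg (Pseg p i q q' t') μ lam θ' W < gg (Pseg p i q q' t') μ lam θ' T}
          = {t' : ℝ | gg (Pseg p i q q' t') μ lam θ' W < gg (Pseg p i q q' t') μ lam θ' T} := by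
        ext t'; simp [hTW]
      rw [this]
      exact isOpen_lt (gg_Pseg_continuous μ lam θ' W) (gg_Pseg_continuous μ lam θ' T)
  have hτV : τ ∈ V := by
    rw [hVdef]
    refine Set.mem_iInter₂.2 fun T _ => fun hTW => hstrictτ T hTW
  obtain ⟨δ, hδpos, hball⟩ := Metric.isOpen_iff.1 hVopen τ hτV
  refine ⟨δ, hδpos, fun t' h0 h1 hnear => ?_⟩
  have ht'V : t' ∈ V := hball (by rwa [Metric.mem_ball, Real.dist_eq])
  have ht'prop : ∀ T : Finset (Fin n), T ≠ W →
      gg (Pseg p i q q' t') μ lam θ' W < gg (Pseg p i q q' t') μ lam θ' T := by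
    intro T hTW
    have := Set.mem_iInter₂.1 (hVdef ▸ ht'V) T (Finset.mem_powerset.2 (Finset.subset_univ T))
    exact this hTW
  have hmem' : θ' ∈ Uset (Pseg p i q q' t') μ lam Finset.univ i := by
    refine ⟨W, hiW, Finset.subset_univ W, fun T hT => ?_⟩
    by_cases hTW : T = W
    · rw [hTW]
    · exact (ht'prop T hTW).le
  have hpt' : Pent (Pseg p i q q' t') := pent_Pseg hp hq hq' h0 h1
  have := (theta_le_iff hpt' hμ hlam (Finset.mem_univ i)).1 hmem'
  linarith

lemma theta_Pseg_lsc (hp : ∀ r, inSimplex (p r)) (hq : inSimplex q) (hq' : inSimplex q')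
    (hμ : ∀ j, 0 ≤ μ j) (hlam : ∀ r, 0 < lam r)
    {τ : ℝ} (hτ0 : 0 ≤ τ) (hτ1 : τ ≤ 1) {ε : ℝ} (hε : 0 < ε) :
    ∃ δ > (0:ℝ), ∀ t', 0 ≤ t' → t' ≤ 1 → |t' - τ| < δ →
      ThetaI (Pseg p i q q' τ) μ lam Finset.univ i - ε
        ≤ ThetaI (Pseg p i q q' t') μ lam Finset.univ i := by
  have hpτ : Pent (Pseg p i q q' τ) := pent_Pseg hp hq hq' hτ0 hτ1
  set θ := ThetaI (Pseg p i q q' τ) μ lam Finset.univ i with hθdef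
  set θ'' := θ - ε with hθ''def
  by_cases hneg : θ'' < 0
  · refine ⟨1, one_pos, fun t' h0 h1 _ => ?_⟩
    have := theta_nonneg (pent_Pseg (i := i) hp hq hq' h0 h1) hμ hlam (Finset.mem_univ i)
    linarith
  -- θ'' ∉ U(τ)
  have hnmem : θ'' ∉ Uset (Pseg p i q q' τ) μ lam Finset.univ i := by
    intro hmem
    have := (theta_le_iff hpτ hμ hlam (Finset.mem_univ i)).1 hmem
    rw [← hθdef] at this
    rw [hθ''def] at this
    linarith
  have hwit : ∀ S : Finset (Fin n), i ∈ S → ∃ T : Finset (Fin n),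
      gg (Pseg p i q q' τ) μ lam θ'' T < gg (Pseg p i q q' τ) μ lam θ'' S := by
    intro S hiS
    by_contra hc
    push_neg at hc
    exact hnmem ⟨S, hiS, Finset.subset_univ S, fun T _ => hc T⟩
  set V := ⋂ S ∈ (Finset.univ.powerset : Finset (Finset (Fin n))),
      {t' : ℝ | i ∈ S → ∃ T : Finset (Fin n),
        gg (Pseg p i q q' t') μ lam θ'' T < gg (Pseg p i q q' t') μ lam θ'' S}
    with hVdef
  have hVopen : IsOpen V := by
    rw [hVdef]
    refine isOpen_biInter_finset fun S _ => ?_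
    by_cases hiS : i ∈ S
    · have : {t' : ℝ | i ∈ S → ∃ T : Finset (Fin n),
          gg (Pseg p i q q' t') μ lam θ'' T < gg (Pseg p i q q' t') μ lam θ'' S}
          = ⋃ T : Finset (Fin n),
            {t' : ℝ | gg (Pseg p i q q' t') μ lam θ'' T < gg (Pseg p i q q' t') μ lam θ'' S} := by
        ext t'; simp [hiS]
      rw [this]
      exact isOpen_iUnion fun T =>
        isOpen_lt (gg_Pseg_continuous μ lam θ'' T) (gg_Pseg_continuous μ lam θ'' S)
    · have : {t' : ℝ | i ∈ S → ∃ T : Finset (Fin n),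
          gg (Pseg p i q q' t') μ lam θ'' T < gg (Pseg p i q q' t') μ lam θ'' S}
          = Set.univ := by
        ext t'; simp [hiS]
      rw [this]; exact isOpen_univ
  have hτV : τ ∈ V := by
    rw [hVdef]
    exact Set.mem_iInter₂.2 fun S _ hiS => hwit S hiS
  obtain ⟨δ, hδpos, hball⟩ := Metric.isOpen_iff.1 hVopen τ hτV
  refine ⟨δ, hδpos, fun t' h0 h1 hnear => ?_⟩
  have ht'V : t' ∈ V := hball (by rwa [Metric.mem_ball, Real.dist_eq])
  have hpt' : Pent (Pseg p i q q' t') := pent_Pseg hp hq hq' h0 h1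
  have hnm' : θ'' ∉ Uset (Pseg p i q q' t') μ lam Finset.univ i := by
    rintro ⟨S, hiS, hSsub, hSm⟩
    have hmemV := Set.mem_iInter₂.1 (hVdef ▸ ht'V) S (Finset.mem_powerset.2 (Finset.subset_univ S))
    obtain ⟨T, hT⟩ := hmemV hiS
    exact absurd (hSm T (Finset.subset_univ T)) (not_le.2 hT)
  have hfin : ¬ (ThetaI (Pseg p i q q' t') μ lam Finset.univ i ≤ θ'') :=
    fun hc => hnm' ((theta_le_iff hpt' hμ hlam (Finset.mem_univ i)).2 hc)
  have hfin2 := not_le.mp hfin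
  linarith

/-- Continuity of `Θ` along the segment. -/
lemma theta_Pseg_cont (hp : ∀ r, inSimplex (p r)) (hq : inSimplex q) (hq' : inSimplex q')
    (hμ : ∀ j, 0 ≤ μ j) (hlam : ∀ r, 0 < lam r)
    {τ : ℝ} (hτ0 : 0 ≤ τ) (hτ1 : τ ≤ 1) {ε : ℝ} (hε : 0 < ε) :
    ∃ δ > (0:ℝ), ∀ t' ∈ Set.Icc (0:ℝ) 1, |t' - τ| < δ →
      |ThetaI (Pseg p i q q' t') μ lam Finset.univ i
        - ThetaI (Pseg p i q q' τ) μ lam Finset.univ i| ≤ ε := by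
  obtain ⟨δ₁, hδ₁, h₁⟩ := theta_Pseg_usc hp hq hq' hμ hlam hτ0 hτ1 hε
  obtain ⟨δ₂, hδ₂, h₂⟩ := theta_Pseg_lsc hp hq hq' hμ hlam hτ0 hτ1 hε
  refine ⟨min δ₁ δ₂, lt_min hδ₁ hδ₂, fun t' ht' hnear => ?_⟩
  have ha := h₁ t' ht'.1 ht'.2 (lt_of_lt_of_le hnear (min_le_left _ _))
  have hb := h₂ t' ht'.1 ht'.2 (lt_of_lt_of_le hnear (min_le_right _ _))
  rw [abs_le]
  constructor <;> linarith

end segment2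
end QL
namespace QL
open scoped Classical
variable {n m : ℕ}

section segment3
variable (p : Fin n → Fin m → ℝ) (i : Fin n) (q q' μ : Fin m → ℝ) (lam : Fin n → ℝ)

noncomputable def Rfun4 (X Y X' Y' : Finset (Fin n)) (t : ℝ) : ℝ :=
  (aQ (Pseg p i q q' t) μ X - aQ (Pseg p i q q' t) μ Y) * (lamQ lam X' - lamQ lam Y')
    - (aQ (Pseg p i q q' t) μ X' - aQ (Pseg p i q q' t) μ Y') * (lamQ lam X - lamQ lam Y)

noncomputable def Rfun2 (X Y : Finset (Fin n)) (t : ℝ) : ℝ :=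
  (aQ (Pseg p i q q' t) μ X - aQ (Pseg p i q q' t) μ Y) - (lamQ lam X - lamQ lam Y)

lemma Rfun4_affine (X Y X' Y' : Finset (Fin n)) (t : ℝ) :
    Rfun4 p i q q' μ lam X Y X' Y' t
      = (1 - t) * Rfun4 p i q q' μ lam X Y X' Y' 0 + t * Rfun4 p i q q' μ lam X Y X' Y' 1 := by
  simp only [Rfun4, aQ_Pseg_affine μ _ t]
  norm_num
  ring

lemma Rfun2_affine (X Y : Finset (Fin n)) (t : ℝ) :
    Rfun2 p i q q' μ lam X Y t
      = (1 - t) * Rfun2 p i q q' μ lam X Y 0 + t * Rfun2 p i q q' μ lam X Y 1 := by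
  simp only [Rfun2, aQ_Pseg_affine μ _ t]
  norm_num
  ring

noncomputable def rootOf (r0 r1 : ℝ) : ℝ := if r0 = r1 then 2 else r0 / (r0 - r1)

noncomputable def Broots : Finset ℝ :=
  insert 0 (insert 1
    ((((Finset.univ :
          Finset (Finset (Fin n) × Finset (Fin n) × Finset (Fin n) × Finset (Fin n))).image
        fun w => rootOf (Rfun4 p i q q' μ lam w.1 w.2.1 w.2.2.1 w.2.2.2 0)
          (Rfun4 p i q q' μ lam w.1 w.2.1 w.2.2.1 w.2.2.2 1)) ∪
      ((Finset.univ : Finset (Finset (Fin n) × Finset (Fin n))).image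
        fun w => rootOf (Rfun2 p i q q' μ lam w.1 w.2 0) (Rfun2 p i q q' μ lam w.1 w.2 1))).filter
      fun z => 0 < z ∧ z < 1))

lemma Broots_zero_mem : (0:ℝ) ∈ Broots p i q q' μ lam := Finset.mem_insert_self _ _

lemma Broots_one_mem : (1:ℝ) ∈ Broots p i q q' μ lam :=
  Finset.mem_insert_of_mem (Finset.mem_insert_self _ _)

lemma Broots_bounds : ∀ z ∈ Broots p i q q' μ lam, 0 ≤ z ∧ z ≤ 1 := by
  intro z hz
  rcases Finset.mem_insert.1 hz with rfl | hz
  · norm_num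
  rcases Finset.mem_insert.1 hz with rfl | hz
  · norm_num
  have := (Finset.mem_filter.1 hz).2
  exact ⟨this.1.le, this.2.le⟩

lemma root4_mem (X Y X' Y' : Finset (Fin n)) {z : ℝ}
    (hz : z = rootOf (Rfun4 p i q q' μ lam X Y X' Y' 0) (Rfun4 p i q q' μ lam X Y X' Y' 1))
    (h0 : 0 < z) (h1 : z < 1) : z ∈ Broots p i q q' μ lam := by
  refine Finset.mem_insert_of_mem (Finset.mem_insert_of_mem (Finset.mem_filter.2 ⟨?_, h0, h1⟩))
  refine Finset.mem_union_left _ (Finset.mem_image.2 ⟨(X, Y, X', Y'), Finset.mem_univ _, hz.symm⟩)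

lemma root2_mem (X Y : Finset (Fin n)) {z : ℝ}
    (hz : z = rootOf (Rfun2 p i q q' μ lam X Y 0) (Rfun2 p i q q' μ lam X Y 1))
    (h0 : 0 < z) (h1 : z < 1) : z ∈ Broots p i q q' μ lam := by
  refine Finset.mem_insert_of_mem (Finset.mem_insert_of_mem (Finset.mem_filter.2 ⟨?_, h0, h1⟩))
  refine Finset.mem_union_right _ (Finset.mem_image.2 ⟨(X, Y), Finset.mem_univ _, hz.symm⟩)

end segment3

section segment4
variable {p : Fin n → Fin m → ℝ} {i : Fin n} {q q' μ : Fin m → ℝ} {lam : Fin n → ℝ}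

/-- The main piecewise-linearity lemma on a single piece. -/
lemma theta_piece (hp : ∀ r, inSimplex (p r)) (hq : inSimplex q) (hq' : inSimplex q')
    (hμ : ∀ j, 0 ≤ μ j) (hlam : ∀ r, 0 < lam r)
    {x y : ℝ} (hx : 0 ≤ x) (hy : y ≤ 1) (hxy : x < y)
    (hgap : ∀ z ∈ Broots p i q q' μ lam, z ∉ Set.Ioo x y) :
    ∃ c d : ℝ, ∀ t ∈ Set.Icc x y,
      max 0 (1 - ThetaI (Pseg p i q q' t) μ lam Finset.univ i) = c * t + d := by
  have hIoo01 : Set.Ioo x y ⊆ Set.Icc (0:ℝ) 1 := fun t ht => ⟨le_of_lt (lt_of_le_of_lt hx ht.1),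
    le_of_lt (lt_of_lt_of_le ht.2 hy)⟩
  -- root avoidance hypotheses in the form needed by `sign_transfer`
  have hroot4 : ∀ X Y X' Y' : Finset (Fin n),
      Rfun4 p i q q' μ lam X Y X' Y' 0 ≠ Rfun4 p i q q' μ lam X Y X' Y' 1 →
      Rfun4 p i q q' μ lam X Y X' Y' 0
        / (Rfun4 p i q q' μ lam X Y X' Y' 0 - Rfun4 p i q q' μ lam X Y X' Y' 1)
        ∈ Set.Ioo x y → False := by
    intro X Y X' Y' hne hin
    have hmem := (hIoo01 hin)
    refine hgap _ (root4_mem p i q q' μ lam X Y X' Y' ?_ ?_ ?_) hin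
    · rw [rootOf, if_neg hne]
    · exact lt_of_le_of_lt hx hin.1
    · exact lt_of_lt_of_le hin.2 hy
  have hroot2 : ∀ X Y : Finset (Fin n),
      Rfun2 p i q q' μ lam X Y 0 ≠ Rfun2 p i q q' μ lam X Y 1 →
      Rfun2 p i q q' μ lam X Y 0 / (Rfun2 p i q q' μ lam X Y 0 - Rfun2 p i q q' μ lam X Y 1)
        ∈ Set.Ioo x y → False := by
    intro X Y hne hin
    refine hgap _ (root2_mem p i q q' μ lam X Y ?_ ?_ ?_) hin
    · rw [rootOf, if_neg hne]
    · exact lt_of_le_of_lt hx hin.1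
    · exact lt_of_lt_of_le hin.2 hy
  -- transfer of minimality along the piece
  have hmin_transfer : ∀ (S Tt : Finset (Fin n)), lamQ lam Tt < lamQ lam S →
      ∀ u ∈ Set.Ioo x y, ∀ v ∈ Set.Ioo x y,
      MinOn (Pseg p i q q' u) μ lam Finset.univ
        ((aQ (Pseg p i q q' u) μ S - aQ (Pseg p i q q' u) μ Tt)
          / (lamQ lam S - lamQ lam Tt)) S →
      MinOn (Pseg p i q q' v) μ lam Finset.univ
        ((aQ (Pseg p i q q' v) μ S - aQ (Pseg p i q q' v) μ Tt)
          / (lamQ lam S - lamQ lam Tt)) S := by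
    intro S Tt hlt u hu v hv hMin
    have hD : 0 < lamQ lam S - lamQ lam Tt := by linarith
    have hiff : ∀ (w : ℝ) (T : Finset (Fin n)),
        (gg (Pseg p i q q' w) μ lam
            ((aQ (Pseg p i q q' w) μ S - aQ (Pseg p i q q' w) μ Tt)
              / (lamQ lam S - lamQ lam Tt)) S
          ≤ gg (Pseg p i q q' w) μ lam
            ((aQ (Pseg p i q q' w) μ S - aQ (Pseg p i q q' w) μ Tt)
              / (lamQ lam S - lamQ lam Tt)) T)
        ↔ Rfun4 p i q q' μ lam S T S Tt w ≤ 0 := by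
      intro w T
      set A := aQ (Pseg p i q q' w) μ S with hA
      set Bb := aQ (Pseg p i q q' w) μ T with hB
      set C := aQ (Pseg p i q q' w) μ Tt with hC
      set lS := lamQ lam S with hlS
      set lT := lamQ lam T with hlT
      set lC := lamQ lam Tt with hlC
      have hD' : (0:ℝ) < lS - lC := hD
      set r := (A - C) / (lS - lC) with hr
      have hcancel : r * (lS - lC) = A - C := div_mul_cancel₀ _ hD'.ne'
      have hsub : (A - C) * (lS - lT) = r * (lS - lT) * (lS - lC) := by
        rw [← hcancel]; ring
      simp only [gg, Rfun4]
      constructor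
      · intro h
        have h1 : A - Bb ≤ r * (lS - lT) := by nlinarith [h]
        have h2 := mul_le_mul_of_nonneg_right h1 hD'.le
        nlinarith [hsub, h2]
      · intro h
        have h2 : (A - Bb) * (lS - lC) ≤ r * (lS - lT) * (lS - lC) := by nlinarith [hsub, h]
        have h1 : A - Bb ≤ r * (lS - lT) := le_of_mul_le_mul_right h2 hD'
        nlinarith [h1]
    refine ⟨Finset.subset_univ S, fun T _ => ?_⟩
    refine (hiff v T).2 ?_
    refine sign_transfer (Rfun4_affine p i q q' μ lam S T S Tt) (hroot4 S T S Tt) hu hv ?_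
    exact (hiff u T).1 (hMin.2 T (Finset.subset_univ T))
  -- tight data
  have hdata : ∀ w ∈ Set.Ioo x y, ∃ S Tt : Finset (Fin n), i ∈ S ∧
      lamQ lam Tt < lamQ lam S ∧
      MinOn (Pseg p i q q' w) μ lam Finset.univ
        (ThetaI (Pseg p i q q' w) μ lam Finset.univ i) S ∧
      ThetaI (Pseg p i q q' w) μ lam Finset.univ i
        = (aQ (Pseg p i q q' w) μ S - aQ (Pseg p i q q' w) μ Tt)
          / (lamQ lam S - lamQ lam Tt) := by
    intro w hw
    have hpw : Pent (Pseg p i q q' w) := pent_Pseg hp hq hq' (hIoo01 hw).1 (hIoo01 hw).2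
    obtain ⟨S, Tt, hiS, hSmin, hTtsub, hlt, htight⟩ :=
      exists_tight hpw hμ hlam (Finset.mem_univ i)
    refine ⟨S, Tt, hiS, hlt, hSmin, ?_⟩
    have hD : 0 < lamQ lam S - lamQ lam Tt := by linarith
    rw [eq_div_iff hD.ne']
    simp only [gg] at htight
    nlinarith [htight]
  set t₀ := (x + y) / 2 with ht₀def
  have ht₀ : t₀ ∈ Set.Ioo x y := ⟨by rw [ht₀def]; linarith, by rw [ht₀def]; linarith⟩
  obtain ⟨S₀, T₀, hiS₀, hlt₀, hS₀min, hρ₀⟩ := hdata t₀ ht₀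
  have hD₀ : 0 < lamQ lam S₀ - lamQ lam T₀ := by linarith
  set ρ : ℝ → ℝ := fun t => (aQ (Pseg p i q q' t) μ S₀ - aQ (Pseg p i q q' t) μ T₀)
    / (lamQ lam S₀ - lamQ lam T₀) with hρdef
  have hρaff : ∀ t : ℝ, ρ t = (1 - t) * ρ 0 + t * ρ 1 := by
    intro t
    rw [hρdef]
    simp only
    rw [aQ_Pseg_affine μ S₀ t, aQ_Pseg_affine μ T₀ t]
    field_simp
    ring
  -- Θ = ρ on the open piece
  have hρIoo : ∀ t₁ ∈ Set.Ioo x y, ThetaI (Pseg p i q q' t₁) μ lam Finset.univ i = ρ t₁ := by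
    intro t₁ ht₁
    have hpt₁ : Pent (Pseg p i q q' t₁) := pent_Pseg hp hq hq' (hIoo01 ht₁).1 (hIoo01 ht₁).2
    have hle : ThetaI (Pseg p i q q' t₁) μ lam Finset.univ i ≤ ρ t₁ := by
      have hS₀min' : MinOn (Pseg p i q q' t₁) μ lam Finset.univ (ρ t₁) S₀ := by
        refine hmin_transfer S₀ T₀ hlt₀ t₀ ht₀ t₁ ht₁ ?_
        rw [← hρ₀]
        exact hS₀min
      exact (theta_le_iff hpt₁ hμ hlam (Finset.mem_univ i)).1
        ⟨S₀, hiS₀, hS₀min'.1, hS₀min'.2⟩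
    have hge : ρ t₁ ≤ ThetaI (Pseg p i q q' t₁) μ lam Finset.univ i := by
      obtain ⟨S₁, T₁, hiS₁, hlt₁, hS₁min, hρ₁⟩ := hdata t₁ ht₁
      have hD₁ : 0 < lamQ lam S₁ - lamQ lam T₁ := by linarith
      set ρ₁ : ℝ → ℝ := fun t => (aQ (Pseg p i q q' t) μ S₁ - aQ (Pseg p i q q' t) μ T₁)
        / (lamQ lam S₁ - lamQ lam T₁) with hρ₁def
      -- S₁ is a minimizer at t₀ for value ρ₁ t₀
      have hS₁min' : MinOn (Pseg p i q q' t₀) μ lam Finset.univ (ρ₁ t₀) S₁ := by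
        refine hmin_transfer S₁ T₁ hlt₁ t₁ ht₁ t₀ ht₀ ?_
        rw [← hρ₁]
        exact hS₁min
      have hpt₀ : Pent (Pseg p i q q' t₀) := pent_Pseg hp hq hq' (hIoo01 ht₀).1 (hIoo01 ht₀).2
      have h1 : ρ t₀ ≤ ρ₁ t₀ := by
        have := (theta_le_iff hpt₀ hμ hlam (Finset.mem_univ i)).1
          ⟨S₁, hiS₁, hS₁min'.1, hS₁min'.2⟩
        rw [hρ₀] at this
        exact this
      -- ratio comparison transfers
      have hcomp : ∀ w : ℝ, (ρ w ≤ ρ₁ w ↔ Rfun4 p i q q' μ lam S₀ T₀ S₁ T₁ w ≤ 0) := by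
        intro w
        rw [hρdef, hρ₁def]
        simp only
        rw [div_le_div_iff₀ hD₀ hD₁, Rfun4]
        constructor <;> intro h <;> linarith
      have h2 : ρ t₁ ≤ ρ₁ t₁ := by
        refine (hcomp t₁).2 ?_
        exact sign_transfer (Rfun4_affine p i q q' μ lam S₀ T₀ S₁ T₁)
          (hroot4 S₀ T₀ S₁ T₁) ht₀ ht₁ ((hcomp t₀).1 h1)
      rw [hρ₁]
      exact h2
    linarith
  -- endpoint matching
  have happx : ∀ η > (0:ℝ), ∃ t, t ∈ Set.Ioo x y ∧ t ∈ Set.Icc (0:ℝ) 1 ∧ |t - x| < η := by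
    intro η hη
    set t := x + min η (y - x) / 2 with htdef
    have hmin0 : 0 < min η (y - x) := lt_min hη (by linarith)
    have htIoo : t ∈ Set.Ioo x y := by
      constructor
      · rw [htdef]; linarith
      · have := min_le_right η (y - x)
        rw [htdef]; linarith
    refine ⟨t, htIoo, hIoo01 htIoo, ?_⟩
    rw [htdef, abs_of_nonneg (by linarith)]
    have := min_le_left η (y - x)
    linarith
  have happy : ∀ η > (0:ℝ), ∃ t, t ∈ Set.Ioo x y ∧ t ∈ Set.Icc (0:ℝ) 1 ∧ |t - y| < η := by
    intro η hη
    set t := y - min η (y - x) / 2 with htdef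
    have hmin0 : 0 < min η (y - x) := lt_min hη (by linarith)
    have htIoo : t ∈ Set.Ioo x y := by
      constructor
      · have := min_le_right η (y - x)
        rw [htdef]; linarith
      · rw [htdef]; linarith
    refine ⟨t, htIoo, hIoo01 htIoo, ?_⟩
    rw [htdef, abs_of_nonpos (by linarith)]
    have := min_le_left η (y - x)
    linarith
  have hΘx : ThetaI (Pseg p i q q' x) μ lam Finset.univ i = ρ x := by
    refine endpoint_eq hρIoo hρaff happx ?_
    intro ε hε
    obtain ⟨δ, hδ, hc⟩ := theta_Pseg_cont hp hq hq' hμ hlam hx (by linarith) hε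
    exact ⟨δ, hδ, fun t' ht' hnear => hc t' ht' hnear⟩
  have hΘy : ThetaI (Pseg p i q q' y) μ lam Finset.univ i = ρ y := by
    refine endpoint_eq hρIoo hρaff happy ?_
    intro ε hε
    obtain ⟨δ, hδ, hc⟩ := theta_Pseg_cont hp hq hq' hμ hlam (by linarith) hy hε
    exact ⟨δ, hδ, fun t' ht' hnear => hc t' ht' hnear⟩
  have hρIcc : ∀ t ∈ Set.Icc x y, ThetaI (Pseg p i q q' t) μ lam Finset.univ i = ρ t := by
    intro t ht
    rcases eq_or_lt_of_le ht.1 with h1 | h1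
    · rw [← h1]; exact hΘx
    rcases eq_or_lt_of_le ht.2 with h2 | h2
    · rw [h2]; exact hΘy
    exact hρIoo t ⟨h1, h2⟩
  -- the clipping
  by_cases hcase : ∀ t ∈ Set.Ioo x y, 1 ≤ ρ t
  · refine ⟨0, 0, fun t ht => ?_⟩
    have h1 : 1 ≤ ρ t := by
      obtain ⟨hcx, hcy⟩ := affine_ge_closure hρaff hxy hcase
      rcases eq_or_lt_of_le ht.1 with h1 | h1
      · rw [← h1]; exact hcx
      rcases eq_or_lt_of_le ht.2 with h2 | h2
      · rw [h2]; exact hcy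
      exact hcase t ⟨h1, h2⟩
    rw [hρIcc t ht, max_eq_left (by linarith)]
    ring
  · push_neg at hcase
    obtain ⟨t₂, ht₂, hρt₂⟩ := hcase
    have hle1 : ∀ t ∈ Set.Ioo x y, ρ t ≤ 1 := by
      have hiff2 : ∀ w : ℝ, (ρ w ≤ 1 ↔ Rfun2 p i q q' μ lam S₀ T₀ w ≤ 0) := by
        intro w
        rw [hρdef]
        simp only
        rw [div_le_one hD₀, Rfun2]
        constructor <;> intro h <;> linarith
      intro t ht
      refine (hiff2 t).2 ?_
      exact sign_transfer (Rfun2_affine p i q q' μ lam S₀ T₀) (hroot2 S₀ T₀) ht₂ ht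
        ((hiff2 t₂).1 hρt₂.le)
    have hle1' : ∀ t ∈ Set.Icc x y, ρ t ≤ 1 := by
      obtain ⟨hcx, hcy⟩ := affine_le_closure hρaff hxy hle1
      intro t ht
      rcases eq_or_lt_of_le ht.1 with h1 | h1
      · rw [← h1]; exact hcx
      rcases eq_or_lt_of_le ht.2 with h2 | h2
      · rw [h2]; exact hcy
      exact hle1 t ⟨h1, h2⟩
    refine ⟨ρ 0 - ρ 1, 1 - ρ 0, fun t ht => ?_⟩
    rw [hρIcc t ht, max_eq_right (by linarith [hle1' t ht]), hρaff t]
    ring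

end segment4
end QL
/-- **Restriction of `r_i` to a segment (Lemma 3.5).** Fix queue `i`, the strategies of the
other queues (the rows of `p` other than `i`), and two strategies `q, q'`. Then
`h(t) = r_i(t·q + (1-t)·q', p_{-i})` is piecewise linear on `[0,1]`, has no local maximum
in the interior (it never strictly increases and then strictly decreases), and in
particular is quasiconvex: `h(t) ≤ max {h(a), h(b)}` for all `0 ≤ a ≤ t ≤ b ≤ 1`. -/
theorem statement11 {n m : ℕ} (hn : 1 ≤ n) (hm : 1 ≤ m)
    (lam : Fin n → ℝ) (μ : Fin m → ℝ) (p : Fin n → Fin m → ℝ)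
    (hlam : ∀ i, 0 < lam i ∧ lam i < 1) (hmu : ∀ j, 0 ≤ μ j ∧ μ j ≤ 1)
    (hp : ∀ i, inSimplex (p i))
    (i : Fin n) (q q' : Fin m → ℝ) (hq : inSimplex q) (hq' : inSimplex q') :
    (∃ (N : ℕ) (ts : Fin (N + 1) → ℝ), StrictMono ts ∧ ts 0 = 0 ∧ ts (Fin.last N) = 1 ∧
      ∀ k : Fin N, ∃ c d : ℝ, ∀ t ∈ Set.Icc (ts k.castSucc) (ts k.succ),
        rateQ lam μ (Function.update p i fun j => t * q j + (1 - t) * q' j) i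
          = c * t + d) ∧
    (¬ ∃ a b c : ℝ, 0 ≤ a ∧ a < b ∧ b < c ∧ c ≤ 1 ∧
      rateQ lam μ (Function.update p i fun j => a * q j + (1 - a) * q' j) i <
        rateQ lam μ (Function.update p i fun j => b * q j + (1 - b) * q' j) i ∧
      rateQ lam μ (Function.update p i fun j => c * q j + (1 - c) * q' j) i <
        rateQ lam μ (Function.update p i fun j => b * q j + (1 - b) * q' j) i) ∧
    (∀ a t b : ℝ, 0 ≤ a → a ≤ t → t ≤ b → b ≤ 1 →
      rateQ lam μ (Function.update p i fun j => t * q j + (1 - t) * q' j) i ≤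
        max (rateQ lam μ (Function.update p i fun j => a * q j + (1 - a) * q' j) i)
          (rateQ lam μ (Function.update p i fun j => b * q j + (1 - b) * q' j) i)) := by
  classical
  have hlam' : ∀ r, 0 < lam r := fun r => (hlam r).1
  have hμ' : ∀ j, 0 ≤ μ j := fun j => (hmu j).1
  have hbridge : ∀ t : ℝ, 0 ≤ t → t ≤ 1 →
      rateQ lam μ (Function.update p i fun j => t * q j + (1 - t) * q' j) i
        = max 0 (1 - QL.ThetaI (QL.Pseg p i q q' t) μ lam Finset.univ i) := by
    intro t h0 h1
    exact QL.rateQ_eq_theta _ μ lam i (QL.pent_Pseg hp hq hq' h0 h1) hμ' hlam'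
  have part3 : ∀ a t b : ℝ, 0 ≤ a → a ≤ t → t ≤ b → b ≤ 1 →
      rateQ lam μ (Function.update p i fun j => t * q j + (1 - t) * q' j) i ≤
        max (rateQ lam μ (Function.update p i fun j => a * q j + (1 - a) * q' j) i)
          (rateQ lam μ (Function.update p i fun j => b * q j + (1 - b) * q' j) i) := by
    intro a t b ha hat htb hb
    rw [hbridge a ha (by linarith), hbridge b (by linarith) hb,
      hbridge t (by linarith) (by linarith)]
    have hqc := QL.theta_Pseg_qc (i := i) (μ := μ) (lam := lam) hp hq hq' hμ' hlam' ha hat htb hb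
    rcases le_total (QL.ThetaI (QL.Pseg p i q q' a) μ lam Finset.univ i)
      (QL.ThetaI (QL.Pseg p i q q' b) μ lam Finset.univ i) with h | h
    · rw [min_eq_left h] at hqc
      exact le_trans (max_le_max (le_refl 0) (by linarith)) (le_max_left _ _)
    · rw [min_eq_right h] at hqc
      exact le_trans (max_le_max (le_refl 0) (by linarith)) (le_max_right _ _)
  refine ⟨?_, ?_, part3⟩
  · -- piecewise linearity
    set B := QL.Broots p i q q' μ lam with hBdef
    have hB0 : (0:ℝ) ∈ B := QL.Broots_zero_mem p i q q' μ lam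
    have hB1 : (1:ℝ) ∈ B := QL.Broots_one_mem p i q q' μ lam
    have hBb : ∀ z ∈ B, 0 ≤ z ∧ z ≤ 1 := QL.Broots_bounds p i q q' μ lam
    have hcard : 1 ≤ B.card := Finset.card_pos.2 ⟨0, hB0⟩
    refine ⟨B.card - 1, ?_⟩
    have hNc : B.card = B.card - 1 + 1 := by omega
    set iso := B.orderIsoOfFin hNc with hisodef
    refine ⟨fun k => (iso k : ℝ), ?_, ?_, ?_, ?_⟩
    · intro a b hab
      have h1 : iso a < iso b := iso.strictMono hab
      exact_mod_cast h1
    · show ((iso 0 : {z // z ∈ B}) : ℝ) = 0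
      obtain ⟨k0, hk0⟩ := iso.surjective ⟨0, hB0⟩
      have h1 : ((iso k0 : {z // z ∈ B}) : ℝ) = 0 := by rw [hk0]
      have h2 : iso 0 ≤ iso k0 := iso.monotone (Fin.zero_le k0)
      have h3 : ((iso 0 : {z // z ∈ B}) : ℝ) ≤ ((iso k0 : {z // z ∈ B}) : ℝ) := by
        exact_mod_cast h2
      have h4 := (hBb _ (iso 0).2).1
      rw [h1] at h3
      linarith
    · show ((iso (Fin.last _) : {z // z ∈ B}) : ℝ) = 1
      obtain ⟨k1, hk1⟩ := iso.surjective ⟨1, hB1⟩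
      have h1 : ((iso k1 : {z // z ∈ B}) : ℝ) = 1 := by rw [hk1]
      have h2 : iso k1 ≤ iso (Fin.last _) := iso.monotone (Fin.le_last k1)
      have h3 : ((iso k1 : {z // z ∈ B}) : ℝ) ≤ ((iso (Fin.last _) : {z // z ∈ B}) : ℝ) := by
        exact_mod_cast h2
      have h4 := (hBb _ (iso (Fin.last _)).2).2
      rw [h1] at h3
      linarith
    · intro k
      set xk := ((iso k.castSucc : {z // z ∈ B}) : ℝ) with hxkdef
      set yk := ((iso k.succ : {z // z ∈ B}) : ℝ) with hykdef
      have hxy : xk < yk := by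
        have h1 : iso k.castSucc < iso k.succ := iso.strictMono (Fin.castSucc_lt_succ : k.castSucc < k.succ)
        exact_mod_cast h1
      have hx0 : 0 ≤ xk := (hBb _ (iso k.castSucc).2).1
      have hy1 : yk ≤ 1 := (hBb _ (iso k.succ).2).2
      have hgap : ∀ z ∈ QL.Broots p i q q' μ lam, z ∉ Set.Ioo xk yk := by
        intro z hz hzIn
        obtain ⟨j, hj⟩ := iso.surjective ⟨z, hz⟩
        have hzval : ((iso j : {z // z ∈ B}) : ℝ) = z := by rw [hj]
        have h1 : k.castSucc < j := by
          have ha : xk < ((iso j : {z // z ∈ B}) : ℝ) := by rw [hzval]; exact hzIn.1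
          have hb : iso k.castSucc < iso j := by exact_mod_cast ha
          exact iso.lt_iff_lt.1 hb
        have h2 : j < k.succ := by
          have ha : ((iso j : {z // z ∈ B}) : ℝ) < yk := by rw [hzval]; exact hzIn.2
          have hb : iso j < iso k.succ := by exact_mod_cast ha
          exact iso.lt_iff_lt.1 hb
        simp only [Fin.lt_def, Fin.coe_castSucc, Fin.val_succ] at h1 h2
        omega
      obtain ⟨c, d, hcd⟩ := QL.theta_piece hp hq hq' hμ' hlam' hx0 hy1 hxy hgap
      refine ⟨c, d, fun t ht => ?_⟩
      have ht0 : 0 ≤ t := le_trans hx0 ht.1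
      have ht1 : t ≤ 1 := le_trans ht.2 hy1
      rw [hbridge t ht0 ht1]
      exact hcd t ht
  · rintro ⟨a, b, c, ha, hab, hbc, hc, h1, h2⟩
    have h3 := part3 a b c ha hab.le hbc.le hc
    exact absurd h3 (not_le.2 (max_lt h1 h2))
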